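/- arXiv:2405.04631 — 7 statements merged into one kernel-verified Lean document; each statement's English description precedes it below -/
import Mathlib

section
/- Let 0 ≤ a_1 < a_2 < ⋯ < a_N < b ≤ d. There are exactly N distinct semistandard pairs in I(d,N) × {0,1,…,d} with content {a_1,…,a_N,b}, namely the iterates P^α((a_1,…,a_N), b) for α ∈ {0,1,…,N−1}; moreover the second components of these pairs, in this order, form the strictly decreasing chain b > a_N > a_{N−1} > ⋯ > a_2. -/
set_option linter.unreachableTactic false
set_option linter.unusedTactic false
set_option linter.unusedVariables false
set_option maxHeartbeats 1000000


noncomputable section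

/-- A pair `(i, j)` with `i ∈ I(d,N)` and `j ∈ {0,…,d}` is *semistandard* if `i` is strictly
increasing and `i₁ ≤ j`. -/
def IsSS (d : ℕ) {N : ℕ} (p : (Fin N → ℕ) × ℕ) : Prop :=
  StrictMono p.1 ∧ (∀ a, p.1 a ≤ d) ∧ p.2 ≤ d ∧
    ∀ a : Fin N, (a : ℕ) = 0 → p.1 a ≤ p.2

/-- The *neighbour* map `P`: swap `j` with `i_α` where `α` is maximal with `i_α ≤ j`
(junk value: the identity, if no such `α` exists). -/
def Pmap {N : ℕ} (p : (Fin N → ℕ) × ℕ) : (Fin N → ℕ) × ℕ :=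
  if h : (Finset.univ.filter fun a : Fin N => p.1 a ≤ p.2).Nonempty then
    let α := (Finset.univ.filter fun a : Fin N => p.1 a ≤ p.2).max' h
    (Function.update p.1 α p.2, p.1 α)
  else p

/-- The *content* of a pair `(i,j)`: the multiset `{i₁,…,i_N} ∪ {j}`. -/
def ssContent {N : ℕ} (p : (Fin N → ℕ) × ℕ) : Multiset ℕ :=
  p.2 ::ₘ Finset.univ.val.map p.1


-- values multiset of an update
lemma map_update_univ {N : ℕ} (f : Fin N → ℕ) (i : Fin N) (v : ℕ) :
    (Finset.univ.val.map (Function.update f i v)) =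
      v ::ₘ ((Finset.univ.erase i).val.map f) := by
  have h1 : (Finset.univ : Finset (Fin N)).val = i ::ₘ (Finset.univ.erase i).val := by
    rw [Finset.erase_val]
    exact (Multiset.cons_erase (by simp)).symm
  rw [h1, Multiset.map_cons, Function.update_self]
  congr 1
  refine Multiset.map_congr rfl fun x hx => ?_
  rw [← Finset.mem_def] at hx
  exact Function.update_of_ne (Finset.mem_erase.1 hx).1 _ _

lemma map_univ_eq_cons {N : ℕ} (f : Fin N → ℕ) (i : Fin N) :
    (Finset.univ.val.map f) = f i ::ₘ ((Finset.univ.erase i).val.map f) := by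
  have h1 : (Finset.univ : Finset (Fin N)).val = i ::ₘ (Finset.univ.erase i).val := by
    rw [Finset.erase_val]
    exact (Multiset.cons_erase (by simp)).symm
  rw [h1, Multiset.map_cons]

lemma ssContent_Pmap {N : ℕ} (p : (Fin N → ℕ) × ℕ) : ssContent (Pmap p) = ssContent p := by
  unfold Pmap
  split
  · next h =>
    set i := (Finset.univ.filter fun a : Fin N => p.1 a ≤ p.2).max' h with hi
    show ssContent (Function.update p.1 i p.2, p.1 i) = _
    unfold ssContent
    simp only
    rw [map_update_univ, map_univ_eq_cons p.1 i, Multiset.cons_swap]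
  · rfl

-- strict mono functions with equal value multisets are equal
lemma strictMono_eq_of_map_eq {N : ℕ} {f g : Fin N → ℕ} (hf : StrictMono f) (hg : StrictMono g)
    (h : Finset.univ.val.map f = Finset.univ.val.map g) : f = g := by
  have himg : Finset.image f Finset.univ = Finset.image g Finset.univ := by
    ext x
    simp only [Finset.mem_image]
    constructor
    · rintro ⟨y, _, rfl⟩
      have : f y ∈ Finset.univ.val.map g := by
        rw [← h]; exact Multiset.mem_map_of_mem f (Finset.mem_univ_val y)
      obtain ⟨z, _, hz⟩ := Multiset.mem_map.1 this
      exact ⟨z, Finset.mem_univ z, hz⟩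
    · rintro ⟨y, _, rfl⟩
      have : g y ∈ Finset.univ.val.map f := by
        rw [h]; exact Multiset.mem_map_of_mem g (Finset.mem_univ_val y)
      obtain ⟨z, _, hz⟩ := Multiset.mem_map.1 this
      exact ⟨z, Finset.mem_univ z, hz⟩
  have hcard : (Finset.image f Finset.univ).card = N := by
    rw [Finset.card_image_of_injective _ hf.injective, Finset.card_univ, Fintype.card_fin]
  have e1 := Finset.orderEmbOfFin_unique hcard (fun x => Finset.mem_image_of_mem f (Finset.mem_univ x)) hf
  have e2 := Finset.orderEmbOfFin_unique hcard (fun x => himg ▸ Finset.mem_image_of_mem g (Finset.mem_univ x)) hg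
  exact e1.trans e2.symm

lemma sub_one_lt_self' (N : ℕ) (hN : 0 < N) : N - 1 < N := by omega

def Efun (N : ℕ) (a : Fin N → ℕ) (b : ℕ) (α : ℕ) : (Fin N → ℕ) × ℕ :=
  if α = 0 then (a, b)
  else
    ((fun k => if h : (k : ℕ) + 1 < N then
        (if (k : ℕ) < N - α then a k else a ⟨(k : ℕ) + 1, h⟩) else b),
     if h : N - α < N then a ⟨N - α, h⟩ else b)

section main
variable {N : ℕ} {d : ℕ} {a : Fin N → ℕ} {b : ℕ}

lemma a_lt_b (hN : 0 < N) (ha : StrictMono a) (hab : a ⟨N - 1, sub_one_lt_self' N hN⟩ < b) (k : Fin N) :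
    a k < b :=
  lt_of_le_of_lt (ha.monotone (by rw [Fin.le_def]; simp; omega : k ≤ (⟨N - 1, by omega⟩ : Fin N))) hab

lemma Pmap_eq {p : (Fin N → ℕ) × ℕ} {i : Fin N} (hi : p.1 i ≤ p.2)
    (hmax : ∀ k : Fin N, p.1 k ≤ p.2 → k ≤ i) :
    Pmap p = (Function.update p.1 i p.2, p.1 i) := by
  have hne : (Finset.univ.filter fun k : Fin N => p.1 k ≤ p.2).Nonempty :=
    ⟨i, by simp [hi]⟩
  have hm : (Finset.univ.filter fun k : Fin N => p.1 k ≤ p.2).max' hne = i := by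
    refine le_antisymm (Finset.max'_le _ _ _ fun y hy => hmax y (by simpa using hy))
      (Finset.le_max' _ _ (by simp [hi]))
  rw [Pmap, dif_pos hne]
  simp only [hm]

lemma Efun_pos (hN : 0 < N) {α : ℕ} (hpos : 0 < α) (hα : α ≤ N) :
    Efun N a b α = ((fun k : Fin N => if h : (k : ℕ) + 1 < N then
        (if (k : ℕ) < N - α then a k else a ⟨(k : ℕ) + 1, h⟩) else b),
        a ⟨N - α, by omega⟩) := by
  unfold Efun
  rw [if_neg (by omega : ¬ α = 0)]
  exact Prod.ext rfl (dif_pos (by omega))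

lemma Pmap_Efun (hN : 0 < N) (ha : StrictMono a) (hab : a ⟨N - 1, sub_one_lt_self' N hN⟩ < b)
    {α : ℕ} (hα : α + 1 < N) :
    Pmap (Efun N a b α) = Efun N a b (α + 1) := by
  rw [Efun_pos hN (by omega) (by omega : α + 1 ≤ N)]
  rcases Nat.eq_zero_or_pos α with rfl | hpos
  · have e0 : Efun N a b 0 = (a, b) := if_pos rfl
    rw [e0, Pmap_eq (i := ⟨N - 1, by omega⟩) (a_lt_b hN ha hab _).le
      (fun k _ => by rw [Fin.le_def]; first | (simp; omega) | simp | omega)]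
    refine Prod.ext (funext fun k => ?_) ?_
    · simp only [Function.update_apply, Fin.ext_iff]
      split_ifs with h1 h2 h3 <;> first
        | rfl
        | omega
        | (exact absurd rfl (by omega))
        | (exact congrArg a (Fin.ext (by first | (simp at *; omega) | simp at * | omega)))
    · simp only
  · rw [Efun_pos hN hpos (by omega)]
    rw [Pmap_eq (i := ⟨N - α - 1, by omega⟩)
      (by
        simp only
        rw [dif_pos (by omega), if_pos (by first | (first | (simp; omega) | simp | omega) | simp | omega)]
        exact ha.monotone (by rw [Fin.le_def]; first | (simp; omega) | simp | omega))
      (fun k hk => by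
        simp only at hk
        rw [Fin.le_def]
        simp only
        by_contra hcon
        push_neg at hcon
        have hk1 : N - α ≤ (k : ℕ) := by omega
        split_ifs at hk with h1 h2
        · omega
        · exact absurd hk (not_le.2 (ha (by rw [Fin.lt_def]; first | (simp; omega) | simp | omega)))
        · exact absurd hk (not_le.2 (a_lt_b hN ha hab _)))]
    refine Prod.ext (funext fun k => ?_) ?_
    · simp only [Function.update_apply, Fin.ext_iff]
      split_ifs with h1 h2 h3 h4 h5 <;> first
        | rfl
        | omega
        | (exact absurd rfl (by omega))
        | (exact congrArg a (Fin.ext (by first | (simp at *; omega) | simp at * | omega)))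
    · simp only
      split_ifs with h1 h2
      · exact congrArg a (Fin.ext (by first | (first | (simp; omega) | simp | omega) | simp | omega))
      · omega
      · omega

lemma iterate_eq_Efun (hN : 0 < N) (ha : StrictMono a) (hab : a ⟨N - 1, sub_one_lt_self' N hN⟩ < b)
    {α : ℕ} (hα : α < N) : Pmap^[α] (a, b) = Efun N a b α := by
  induction α with
  | zero => simp [Efun]
  | succ n ih =>
    rw [Function.iterate_succ_apply', ih (by omega), Pmap_Efun hN ha hab hα]

lemma Efun_snd (hN : 0 < N) {α : ℕ} (hpos : 0 < α) (hα : α ≤ N) :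
    (Efun N a b α).2 = a ⟨N - α, by omega⟩ := by
  rw [Efun_pos hN hpos hα]

lemma Efun_SS (hN : 0 < N) (ha : StrictMono a) (hab : a ⟨N - 1, sub_one_lt_self' N hN⟩ < b)
    (hb : b ≤ d) {α : ℕ} (hα : α < N) : IsSS d (Efun N a b α) := by
  rcases Nat.eq_zero_or_pos α with rfl | hpos
  · exact ⟨ha, fun k => ((a_lt_b hN ha hab k).le.trans hb),
      hb, fun k _ => (a_lt_b hN ha hab k).le⟩
  · rw [Efun_pos hN hpos (by omega)]
    refine ⟨?_, ?_, ?_, ?_⟩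
    · intro k l hkl
      rw [Fin.lt_def] at hkl
      simp only
      split_ifs <;>
        first
          | omega
          | exact a_lt_b hN ha hab _
          | (apply ha; rw [Fin.lt_def]; simp; omega)
    · intro k
      simp only
      split_ifs <;> first | exact hb | exact (a_lt_b hN ha hab _).le.trans hb
    · exact (a_lt_b hN ha hab _).le.trans hb
    · intro k hk
      simp only
      rw [dif_pos (by omega), if_pos (by omega)]
      exact ha.monotone (by rw [Fin.le_def]; simp; omega)

lemma ssContent_iterate (α : ℕ) (p : (Fin N → ℕ) × ℕ) :
    ssContent (Pmap^[α] p) = ssContent p := by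
  induction α with
  | zero => rfl
  | succ n ih => rw [Function.iterate_succ_apply', ssContent_Pmap, ih]

end main

/-- Lemma 2.3 of the paper. Let `0 ≤ a₁ < ⋯ < a_N < b ≤ d`. The `N` distinct
semistandard pairs with content `{a₁,…,a_N,b}` are the iterates `P^α((a₁,…,a_N), b)` for
`0 ≤ α ≤ N-1`, and their second components form the decreasing chain `b > a_N > ⋯ > a₂`. -/
theorem statement1 (N d : ℕ) (hN : 0 < N) (a : Fin N → ℕ) (b : ℕ)
    (ha : StrictMono a) (hab : a ⟨N - 1, by omega⟩ < b) (hb : b ≤ d) :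
    (∀ p : (Fin N → ℕ) × ℕ,
        (IsSS d p ∧ ssContent p = ssContent (a, b)) ↔ ∃ α < N, p = Pmap^[α] (a, b)) ∧
    (∀ α < N, ∀ β < N, Pmap^[α] (a, b) = Pmap^[β] (a, b) → α = β) ∧
    ((Pmap^[0] (a, b)).2 = b) ∧
    (∀ α (h₁ : 0 < α) (h₂ : α < N), (Pmap^[α] (a, b)).2 = a ⟨N - α, by omega⟩) := by
  have hiter : ∀ α < N, Pmap^[α] (a, b) = Efun N a b α := fun α hα =>
    iterate_eq_Efun hN ha hab hα
  have hC : ∀ α < N, ssContent (Efun N a b α) = ssContent (a, b) := fun α hα => by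
    rw [← hiter α hα, ssContent_iterate]
  refine ⟨?_, ?_, rfl, ?_⟩
  · intro p
    constructor
    · rintro ⟨hp, hc⟩
      have hmem : p.2 ∈ ssContent (a, b) := by rw [← hc]; exact Multiset.mem_cons_self _ _
      rw [ssContent] at hmem
      rcases Multiset.mem_cons.1 hmem with hj | hj
      · refine ⟨0, hN, ?_⟩
        rw [hiter 0 hN]
        have h1 : Finset.univ.val.map p.1 = Finset.univ.val.map a := by
          have hc' := hc
          rw [ssContent, ssContent, hj] at hc'
          exact (Multiset.cons_inj_right _).1 hc'
        exact Prod.ext (strictMono_eq_of_map_eq hp.1 ha h1) hj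
      · obtain ⟨m, _, hm'0⟩ := Multiset.mem_map.1 hj
        have hm : a m = p.2 := hm'0
        by_cases hm0 : (m : ℕ) = 0
        · exfalso
          have hm' : m = (⟨0, hN⟩ : Fin N) := Fin.ext hm0
          have h0mem : p.1 ⟨0, hN⟩ ∈ ssContent (a, b) := by
            rw [← hc, ssContent]
            exact Multiset.mem_cons_of_mem
              (Multiset.mem_map_of_mem _ (Finset.mem_univ_val _))
          have hle : p.1 ⟨0, hN⟩ ≤ p.2 := hp.2.2.2 ⟨0, hN⟩ rfl
          have hp2 : p.2 = a ⟨0, hN⟩ := by rw [← hm, hm']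
          rw [ssContent] at h0mem
          rcases Multiset.mem_cons.1 h0mem with h | h
          · rw [h, hp2] at hle
            exact absurd hle (not_le.2 (a_lt_b hN ha hab _))
          · obtain ⟨k, _, hk'0⟩ := Multiset.mem_map.1 h
            have hk : a k = p.1 ⟨0, hN⟩ := hk'0
            have hk0 : k = (⟨0, hN⟩ : Fin N) := by
              have : a k ≤ a ⟨0, hN⟩ := by rw [hk]; rw [hp2] at hle; exact hle
              have hkle := ha.le_iff_le.1 this
              rw [Fin.le_def] at hkle
              exact Fin.ext (by simpa using hkle)
            have hpeq : p.1 ⟨0, hN⟩ = a ⟨0, hN⟩ := by rw [← hk, hk0]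
            have hnd : (Finset.univ.val.map a).Nodup :=
              Finset.univ.nodup.map ha.injective
            have c1 : Multiset.count (a ⟨0, hN⟩) (ssContent (a, b)) = 1 := by
              rw [ssContent]
              show Multiset.count _ (b ::ₘ _) = 1
              rw [Multiset.count_cons_of_ne (ne_of_lt (a_lt_b hN ha hab _)) _]
              exact Multiset.count_eq_one_of_mem hnd
                (Multiset.mem_map_of_mem _ (Finset.mem_univ_val _))
            have c2 : 2 ≤ Multiset.count (a ⟨0, hN⟩) (ssContent p) := by
              rw [ssContent, hp2, Multiset.count_cons_self]
              have h1 : 1 ≤ Multiset.count (a ⟨0, hN⟩) (Finset.univ.val.map p.1) :=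
                Multiset.one_le_count_iff_mem.2
                  (by rw [← hpeq]; exact Multiset.mem_map_of_mem _ (Finset.mem_univ_val _))
              omega
            rw [hc, c1] at c2
            omega
        · have hmlt : (m : ℕ) < N := m.isLt
          refine ⟨N - (m : ℕ), by omega, ?_⟩
          rw [hiter _ (by omega)]
          have hsnd : (Efun N a b (N - (m : ℕ))).2 = a m := by
            rw [Efun_snd hN (by omega) (by omega)]
            exact congrArg a (Fin.ext (by simp; omega))
          have hESS := Efun_SS hN ha hab hb (show N - (m : ℕ) < N by omega)
          have h1 : Finset.univ.val.map p.1 =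
              Finset.univ.val.map (Efun N a b (N - (m : ℕ))).1 := by
            have e1 : ssContent p = ssContent (Efun N a b (N - (m : ℕ))) := by
              rw [hc, hC _ (by omega)]
            rw [ssContent, ssContent, hsnd, ← hm] at e1
            exact (Multiset.cons_inj_right _).1 e1
          exact Prod.ext (strictMono_eq_of_map_eq hp.1 hESS.1 h1) (by rw [hsnd, hm])
    · rintro ⟨α, hα, rfl⟩
      rw [hiter α hα]
      exact ⟨Efun_SS hN ha hab hb hα, hC α hα⟩
  · intro α hα β hβ h
    rw [hiter α hα, hiter β hβ] at h
    have h2 := congrArg Prod.snd h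
    rcases Nat.eq_zero_or_pos α with rfl | hαp <;> rcases Nat.eq_zero_or_pos β with rfl | hβp
    · rfl
    · rw [show (Efun N a b 0).2 = b from rfl, Efun_snd hN hβp (by omega)] at h2
      exact absurd h2.symm (ne_of_lt (a_lt_b hN ha hab _))
    · rw [show (Efun N a b 0).2 = b from rfl, Efun_snd hN hαp (by omega)] at h2
      exact absurd h2 (ne_of_lt (a_lt_b hN ha hab _))
    · rw [Efun_snd hN hαp (by omega), Efun_snd hN hβp (by omega)] at h2
      have h3 := ha.injective h2
      rw [Fin.ext_iff] at h3
      simp only at h3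
      omega
  · intro α h₁ h₂
    rw [hiter α h₂, Efun_snd hN h₁ (by omega)]


end
end

section
/- The vectors F_Δ(i,j) ∈ ⋀^N Sym^d E ⊗ Sym^d E, as (i,j) ranges over all semistandard pairs in I(d,N) × {0,1,…,d}, are linearly independent over F. -/
open MvPolynomial TensorProduct

set_option maxHeartbeats 1000000
set_option synthInstance.maxHeartbeats 400000

noncomputable section

/-- `Sym' F c` : the `c`-th symmetric power of `E = F²`, realised as the space of
homogeneous polynomials of degree `c` in the two variables `X = X 0`, `Y = X 1`. -/
abbrev Sym' (F : Type*) [Field F] (c : ℕ) : Type _ :=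
  ↥(MvPolynomial.homogeneousSubmodule (Fin 2) F c)

variable (F : Type*) [Field F]

/-- The basis monomial `X^(c-i) Y^i` of `Sym' F c`; it is `0` (junk) if `i > c`. -/
def XY (c i : ℕ) : Sym' F c :=
  if h : i ≤ c then
    ⟨(X 0 : MvPolynomial (Fin 2) F) ^ (c - i) * X 1 ^ i, by
      rw [MvPolynomial.mem_homogeneousSubmodule]
      have := ((isHomogeneous_X_pow (R := F) (0 : Fin 2) (c - i)).mul
        (isHomogeneous_X_pow (R := F) (1 : Fin 2) i))
      rwa [Nat.sub_add_cancel h] at this⟩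
  else 0

/-- `F_∧^{(c)}(k) = X^{c-k₁}Y^{k₁} ∧ ⋯ ∧ X^{c-k_r}Y^{k_r}` in `⋀^r (Sym' F c)`. -/
def wedge (c : ℕ) {r : ℕ} (k : Fin r → ℕ) : ⋀[F]^r (Sym' F c) :=
  ⟨ExteriorAlgebra.ιMulti F r fun a => XY F c (k a),
    ExteriorAlgebra.ιMulti_range F r (Set.mem_range_self _)⟩

/-- `F(i,j) = F_∧^{(d)}(i) ⊗ X^{d-j}Y^j`. -/
def Fp (d : ℕ) {N : ℕ} (i : Fin N → ℕ) (j : ℕ) :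
    (⋀[F]^N (Sym' F d)) ⊗[F] (Sym' F d) :=
  wedge F d i ⊗ₜ[F] XY F d j

/-- The multiplication map `μ_N : ⋀^N V ⊗ V → ⋀^{N+1} V` for `V = Sym' F c`. -/
def mu (c N : ℕ) :
    ((⋀[F]^N (Sym' F c)) ⊗[F] (Sym' F c)) →ₗ[F] ⋀[F]^(N + 1) (Sym' F c) :=
  TensorProduct.lift
    (LinearMap.mk₂ F
      (fun w v => ⟨(w : ExteriorAlgebra F (Sym' F c)) * ExteriorAlgebra.ι F v, by
        have h := Submodule.mul_mem_mul w.2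
          (LinearMap.mem_range_self (ExteriorAlgebra.ι F (M := Sym' F c)) v)
        rwa [← pow_succ] at h⟩)
      (fun w w' v => by ext; simp [add_mul])
      (fun a w v => by ext; simp [mul_assoc, Algebra.smul_mul_assoc])
      (fun w v v' => by ext; simp [mul_add])
      (fun a w v => by ext; simp [Algebra.mul_smul_comm]))

/-- The box `B(k) = [k₁,k₂) × ⋯ × [k_N, k_{N+1})` as a finset of multi-indices. -/
def box {N : ℕ} (k : Fin (N + 1) → ℕ) : Finset (Fin N → ℕ) :=
  Fintype.piFinset fun a : Fin N => Finset.Ico (k a.castSucc) (k a.succ)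

/-- `v_{(s,k)} = Σ_{i ∈ B(k)} F(i, s + |k| - N - |i|)`. -/
def vv (d N : ℕ) (s : ℕ) (k : Fin (N + 1) → ℕ) :
    (⋀[F]^N (Sym' F d)) ⊗[F] (Sym' F d) :=
  ∑ i ∈ box k, Fp F d i (s + (∑ a, k a) - N - ∑ a, i a)

/-- `F_Δ(i,j)`. -/
def FDelta (d : ℕ) {N : ℕ} (p : (Fin N → ℕ) × ℕ) :
    (⋀[F]^N (Sym' F d)) ⊗[F] (Sym' F d) :=
  if ∃ a, p.1 a = p.2 then Fp F d p.1 p.2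
  else Fp F d p.1 p.2 + Fp F d (Pmap p).1 (Pmap p).2

namespace Statement2Aux

open MvPolynomial

variable (F : Type*) [Field F]

/-- Coefficient functional on `Sym' F d` picking out the coefficient of `X^(d-j) Y^j`. -/
def eps (d j : ℕ) : Sym' F d →ₗ[F] F :=
  (MvPolynomial.lcoeff F (Finsupp.single 0 (d - j) + Finsupp.single 1 j)).comp
    (Submodule.subtype _)

lemma eps_XY {d j j' : ℕ} (hj : j ≤ d) (hj' : j' ≤ d) :
    eps F d j (XY F d j') = if j = j' then 1 else 0 := by
  rw [XY, dif_pos hj']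
  simp only [eps, LinearMap.comp_apply, Submodule.coe_subtype, lcoeff_apply]
  rw [X_pow_eq_monomial, X_pow_eq_monomial, monomial_mul, mul_one, coeff_monomial]
  have key : (Finsupp.single (0 : Fin 2) (d - j') + Finsupp.single 1 j'
      = Finsupp.single (0 : Fin 2) (d - j) + Finsupp.single 1 j) ↔ j = j' := by
    constructor
    · intro h
      have := DFunLike.congr_fun h 1
      simpa [Finsupp.single_apply] using this.symm
    · rintro rfl; rfl
  simp only [key]

/-- The alternating "minor" map. -/
def altA (d : ℕ) {n : ℕ} (i : Fin n → ℕ) : (Sym' F d) [⋀^Fin n]→ₗ[F] F :=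
  Matrix.detRowAlternating.compLinearMap (LinearMap.pi fun a => eps F d (i a))

/-- The functional on `⋀^n (Sym' F d)` given by the minor indexed by `i`. -/
def phiW (d : ℕ) {n : ℕ} (i : Fin n → ℕ) : ⋀[F]^n (Sym' F d) →ₗ[F] F :=
  (ExteriorAlgebra.liftAlternating (Function.update (fun _ => 0) n (altA F d i))).comp
    (Submodule.subtype _)

lemma phiW_wedge (d : ℕ) {n : ℕ} (i k : Fin n → ℕ) :
    phiW F d i (wedge F d k) =
      Matrix.det (Matrix.of fun b a => eps F d (i a) (XY F d (k b))) := by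
  simp only [phiW, wedge, LinearMap.comp_apply, Submodule.coe_subtype]
  rw [ExteriorAlgebra.liftAlternating_apply_ιMulti, Function.update_self]
  rfl

lemma phiW_wedge_self (d : ℕ) {n : ℕ} {i : Fin n → ℕ} (hi : StrictMono i)
    (hid : ∀ a, i a ≤ d) : phiW F d i (wedge F d i) = 1 := by
  rw [phiW_wedge]
  have hM : (Matrix.of fun b a => eps F d (i a) (XY F d (i b)))
      = (1 : Matrix (Fin n) (Fin n) F) := by
    ext b a
    rw [Matrix.of_apply, eps_XY F (hid a) (hid b), Matrix.one_apply]
    simp [hi.injective.eq_iff, eq_comm]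
  rw [hM, Matrix.det_one]

lemma phiW_wedge_ne (d : ℕ) {n : ℕ} {i k : Fin n → ℕ} (hi : StrictMono i)
    (hk : StrictMono k) (hid : ∀ a, i a ≤ d) (hkd : ∀ a, k a ≤ d) (hne : i ≠ k) :
    phiW F d i (wedge F d k) = 0 := by
  rw [phiW_wedge]
  obtain ⟨b, hb⟩ : ∃ b, k b ∉ Set.range i := by
    by_contra h
    push_neg at h
    apply hne
    apply (@StrictMono.range_inj (Fin n) ℕ _ _
      (inferInstance : IsWellFounded (Fin n) (·<·)) i k hi hk).1
    have ht : (Finset.univ.image k : Finset ℕ) ⊆ Finset.univ.image i := by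
      intro x hx
      simp only [Finset.mem_image] at hx ⊢
      obtain ⟨b, -, rfl⟩ := hx
      obtain ⟨a, ha⟩ := h b
      exact ⟨a, Finset.mem_univ a, ha⟩
    have hcard : (Finset.univ.image i).card ≤ (Finset.univ.image k).card := by
      rw [Finset.card_image_of_injective _ hi.injective,
        Finset.card_image_of_injective _ hk.injective]
    have heq := Finset.eq_of_subset_of_card_le ht hcard
    have : ((Finset.univ.image i : Finset ℕ) : Set ℕ)
        = ((Finset.univ.image k : Finset ℕ) : Set ℕ) := by rw [heq]
    simpa [Finset.coe_image, Set.image_univ] using this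
  apply Matrix.det_eq_zero_of_row_eq_zero b
  intro a
  rw [Matrix.of_apply, eps_XY F (hid a) (hkd b), if_neg]
  exact fun h => hb ⟨a, h⟩

/-- The functional on `⋀^n (Sym' F d) ⊗ Sym' F d` dual to `Fp`. -/
def phi (d : ℕ) {n : ℕ} (q : (Fin n → ℕ) × ℕ) :
    ((⋀[F]^n (Sym' F d)) ⊗[F] (Sym' F d)) →ₗ[F] F :=
  TensorProduct.lift ((LinearMap.mul F F).compl₁₂ (phiW F d q.1) (eps F d q.2))

lemma phi_Fp (d : ℕ) {n : ℕ} (q : (Fin n → ℕ) × ℕ) (i : Fin n → ℕ) (j : ℕ) :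
    phi F d q (Fp F d i j) = phiW F d q.1 (wedge F d i) * eps F d q.2 (XY F d j) := by
  simp only [phi, Fp, TensorProduct.lift.tmul, LinearMap.compl₁₂_apply,
    LinearMap.mul_apply']

lemma phi_Fp_self (d : ℕ) {n : ℕ} {i : Fin n → ℕ} {j : ℕ} (hi : StrictMono i)
    (hid : ∀ a, i a ≤ d) (hj : j ≤ d) : phi F d (i, j) (Fp F d i j) = 1 := by
  rw [phi_Fp, phiW_wedge_self F d hi hid, eps_XY F hj hj, if_pos rfl, one_mul]

lemma phi_Fp_ne (d : ℕ) {n : ℕ} {q : (Fin n → ℕ) × ℕ} {i : Fin n → ℕ} {j : ℕ}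
    (hq1 : StrictMono q.1) (hq1d : ∀ a, q.1 a ≤ d) (hq2 : q.2 ≤ d)
    (hi : StrictMono i) (hid : ∀ a, i a ≤ d) (hj : j ≤ d) (hne : q ≠ (i, j)) :
    phi F d q (Fp F d i j) = 0 := by
  rw [phi_Fp]
  by_cases h1 : q.1 = i
  · have h2 : q.2 ≠ j := by
      intro h2
      exact hne (Prod.ext h1 h2)
    rw [eps_XY F hq2 hj, if_neg h2, mul_zero]
  · rw [phiW_wedge_ne F d hq1 hi hq1d hid h1, zero_mul]

lemma Pmap_eq {n : ℕ} (p : (Fin n → ℕ) × ℕ)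
    (h : (Finset.univ.filter fun a : Fin n => p.1 a ≤ p.2).Nonempty) :
    Pmap p = (Function.update p.1
        ((Finset.univ.filter fun a : Fin n => p.1 a ≤ p.2).max' h) p.2,
      p.1 ((Finset.univ.filter fun a : Fin n => p.1 a ≤ p.2).max' h)) := by
  simp only [Pmap, dif_pos h]

lemma Pmap_props {n d : ℕ} (hN : 0 < n) (p : (Fin n → ℕ) × ℕ) (hss : IsSS d p)
    (hne : ∀ a, p.1 a ≠ p.2) :
    StrictMono (Pmap p).1 ∧ (∀ a, (Pmap p).1 a ≤ d) ∧ (Pmap p).2 ≤ d ∧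
      (Pmap p).2 < p.2 := by
  obtain ⟨hi, hid, hjd, h0⟩ := hss
  have hmem0 : (⟨0, hN⟩ : Fin n) ∈ Finset.univ.filter fun a : Fin n => p.1 a ≤ p.2 := by
    simp [h0 ⟨0, hN⟩ rfl]
  have hsne : (Finset.univ.filter fun a : Fin n => p.1 a ≤ p.2).Nonempty := ⟨_, hmem0⟩
  rw [Pmap_eq p hsne]
  dsimp only
  set α := (Finset.univ.filter fun a : Fin n => p.1 a ≤ p.2).max' hsne with hα
  have hαs : α ∈ Finset.univ.filter fun a : Fin n => p.1 a ≤ p.2 :=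
    Finset.max'_mem _ hsne
  have hαle : p.1 α ≤ p.2 := (Finset.mem_filter.mp hαs).2
  have hαlt : p.1 α < p.2 := lt_of_le_of_ne hαle (hne α)
  have hgt : ∀ b, α < b → p.2 < p.1 b := by
    intro b hb
    by_contra hle
    push_neg at hle
    exact absurd (Finset.le_max' _ b (by simp [hle])) (not_le.2 hb)
  refine ⟨?_, ?_, hid α, hαlt⟩
  · intro a b hab
    rcases eq_or_ne a α with rfl | ha
    · rw [Function.update_self, Function.update_of_ne (ne_of_gt hab)]
      exact hgt b hab
    · rw [Function.update_of_ne ha]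
      rcases eq_or_ne b α with rfl | hb
      · rw [Function.update_self]
        exact (hi hab).trans hαlt
      · rw [Function.update_of_ne hb]
        exact hi hab
  · intro a
    rcases eq_or_ne a α with rfl | ha
    · rw [Function.update_self]; exact hjd
    · rw [Function.update_of_ne ha]; exact hid a

lemma phi_FDelta_self {n d : ℕ} (hN : 0 < n) (q : (Fin n → ℕ) × ℕ) (hq : IsSS d q) :
    phi F d q (FDelta F d q) = 1 := by
  obtain ⟨hi, hid, hjd, h0⟩ := hq
  rw [FDelta]
  by_cases hex : ∃ a, q.1 a = q.2
  · rw [if_pos hex]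
    exact phi_Fp_self F d hi hid hjd
  · rw [if_neg hex, map_add]
    push_neg at hex
    obtain ⟨hP1, hP2, hP3, hP4⟩ := Pmap_props hN q ⟨hi, hid, hjd, h0⟩ hex
    rw [phi_Fp_self F d hi hid hjd]
    rw [phi_Fp_ne F d hi hid hjd hP1 hP2 hP3 ?_, add_zero]
    intro h
    have : q.2 = (Pmap q).2 := congrArg Prod.snd h
    omega
  
lemma phi_FDelta_ne {n d : ℕ} (hN : 0 < n) (q p : (Fin n → ℕ) × ℕ) (hq : IsSS d q)
    (hp : IsSS d p) (hne : q ≠ p) (hle : p.2 ≤ q.2) :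
    phi F d q (FDelta F d p) = 0 := by
  obtain ⟨hqi, hqid, hqjd, hq0⟩ := hq
  obtain ⟨hpi, hpid, hpjd, hp0⟩ := hp
  rw [FDelta]
  have h1 : phi F d q (Fp F d p.1 p.2) = 0 := by
    apply phi_Fp_ne F d hqi hqid hqjd hpi hpid hpjd
    simpa using hne
  by_cases hex : ∃ a, p.1 a = p.2
  · rw [if_pos hex]; exact h1
  · rw [if_neg hex, map_add, h1, zero_add]
    push_neg at hex
    obtain ⟨hP1, hP2, hP3, hP4⟩ := Pmap_props hN p ⟨hpi, hpid, hpjd, hp0⟩ hex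
    apply phi_Fp_ne F d hqi hqid hqjd hP1 hP2 hP3
    intro h
    have : q.2 = (Pmap p).2 := congrArg Prod.snd h
    omega

end Statement2Aux

/-- Lemma 2.2 of the paper. The vectors `F_Δ(i,j)`, for `(i,j)` ranging over the
semistandard pairs in `I(d,N) × {0,…,d}`, are linearly independent over `F`. -/
theorem statement2 (F : Type*) [Field F] (N d : ℕ) (hN : 0 < N) :
    LinearIndependent F
      (fun p : {p : (Fin N → ℕ) × ℕ // IsSS d p} => FDelta F d p.1) := by
  classical
  have key := linearIndependent_iff' (R := F)
    (v := fun p : {p : (Fin N → ℕ) × ℕ // IsSS d p} => FDelta F d p.1)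
  rw [key]
  intro s g hsum p₀ hp₀
  by_contra hg0
  have htne : (s.filter fun p => g p ≠ 0).Nonempty :=
    ⟨p₀, Finset.mem_filter.2 ⟨hp₀, hg0⟩⟩
  obtain ⟨q₀, hq₀t, hq₀max⟩ :=
    Finset.exists_max_image (s.filter fun p => g p ≠ 0) (fun p => p.1.2) htne
  obtain ⟨hq₀s, hgq₀⟩ := Finset.mem_filter.mp hq₀t
  have h0 : ∑ p ∈ s, g p * Statement2Aux.phi F d q₀.1 (FDelta F d p.1) = 0 := by
    have := congrArg (Statement2Aux.phi F d q₀.1) hsum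
    simpa [map_sum, map_smul, smul_eq_mul] using this
  have hmain : ∑ p ∈ s, g p * Statement2Aux.phi F d q₀.1 (FDelta F d p.1) = g q₀ := by
    rw [Finset.sum_eq_single_of_mem q₀ hq₀s]
    · rw [Statement2Aux.phi_FDelta_self F hN q₀.1 q₀.2, mul_one]
    · intro p hps hpne
      by_cases hgp : g p = 0
      · rw [hgp, zero_mul]
      · have hpt : p ∈ s.filter fun p => g p ≠ 0 := Finset.mem_filter.2 ⟨hps, hgp⟩
        have hle : p.1.2 ≤ q₀.1.2 := hq₀max p hpt
        have hne' : q₀.1 ≠ p.1 := fun h => hpne (Subtype.ext h.symm)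
        rw [Statement2Aux.phi_FDelta_ne F hN q₀.1 p.1 q₀.2 p.2 hne' hle, mul_zero]
  rw [hmain] at h0
  exact hgq₀ h0

end
end

section
/- For α ∈ {1,…,N} let S_α be the set of semistandard pairs (i,j) ∈ I(d,N) × {0,1,…,d} such that i_α ≤ j, and additionally j < i_{α+1} when α < N. Then the sets S_1,…,S_N partition the set of all semistandard pairs, and for each α the map (i,j) ↦ (i_1,…,i_α, j+1, i_{α+1}+1, i_{α+2}+1,…,i_N+1) is a bijection from S_α onto the set of strictly increasing multi-indices in I(d+1, N+1); in particular every S_α has cardinality C(d+2, N+1). -/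
noncomputable section

/-- The set `S_α` of semistandard pairs `(i,j)` with `i_α ≤ j`, and `j < i_{α+1}` when `α < N`. -/
def Sset (d : ℕ) {N : ℕ} (α : Fin N) : Set ((Fin N → ℕ) × ℕ) :=
  {p | IsSS d p ∧ p.1 α ≤ p.2 ∧ ∀ h : (α : ℕ) + 1 < N, p.2 < p.1 ⟨(α : ℕ) + 1, h⟩}

/-- The map `(i,j) ↦ (i₁,…,i_α, j+1, i_{α+1}+1, …, i_N+1)`. -/
def emb {N : ℕ} (α : Fin N) (p : (Fin N → ℕ) × ℕ) : Fin (N + 1) → ℕ := fun b =>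
  if hb : (b : ℕ) ≤ (α : ℕ) then p.1 ⟨b, lt_of_le_of_lt hb α.isLt⟩
  else if (b : ℕ) = (α : ℕ) + 1 then p.2 + 1
  else p.1 ⟨(b : ℕ) - 1, by have := b.isLt; omega⟩ + 1

section aux

variable {N d : ℕ}

lemma card_strictMono_bounded (n m : ℕ) :
    {k : Fin n → ℕ | StrictMono k ∧ ∀ b, k b ≤ m}.ncard = (m + 1).choose n := by
  have E : {k : Fin n → ℕ // StrictMono k ∧ ∀ b, k b ≤ m} ≃
      {s : Finset (Fin (m + 1)) // s.card = n} := by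
    refine
      { toFun := fun k => ⟨Finset.univ.image fun b => (⟨k.1 b, by
          have := k.2.2 b; omega⟩ : Fin (m + 1)), ?_⟩
        invFun := fun s => ⟨fun b => ((s.1.orderIsoOfFin s.2 b : Fin (m + 1)) : ℕ), ?_, ?_⟩
        left_inv := ?_, right_inv := ?_ }
    · rw [Finset.card_image_of_injective _ ?_, Finset.card_univ, Fintype.card_fin]
      intro a b hab
      exact k.2.1.injective (by simpa [Fin.ext_iff] using hab)
    · intro a b hab
      exact_mod_cast (s.1.orderIsoOfFin s.2).strictMono hab
    · intro b
      exact Nat.lt_succ_iff.mp (s.1.orderIsoOfFin s.2 b : Fin (m + 1)).isLt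
    · rintro ⟨k, hk, hb⟩
      ext b
      have huniq := Finset.orderEmbOfFin_unique
        (s := Finset.univ.image fun b => (⟨k b, by have := hb b; omega⟩ : Fin (m + 1)))
        (f := fun b => (⟨k b, by have := hb b; omega⟩ : Fin (m + 1)))
        (by rw [Finset.card_image_of_injective _ ?_, Finset.card_univ, Fintype.card_fin]
            intro a b hab
            exact hk.injective (by simpa [Fin.ext_iff] using hab))
        (fun i => Finset.mem_image_of_mem _ (Finset.mem_univ i))
        (fun a b hab => by simpa [Fin.lt_def] using hk hab)
      simp only [Finset.coe_orderIsoOfFin_apply]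
      rw [← huniq]
    · rintro ⟨s, hs⟩
      ext1
      dsimp only
      apply Finset.eq_of_subset_of_card_le
      · intro x hx
        simp only [Finset.mem_image, Finset.mem_univ, true_and] at hx
        obtain ⟨b, rfl⟩ := hx
        simpa [Fin.eta] using (s.orderIsoOfFin hs b).2
      · rw [hs, Finset.card_image_of_injective _ ?_, Finset.card_univ, Fintype.card_fin]
        intro a b hab
        exact (s.orderIsoOfFin hs).injective (by
          apply Subtype.ext
          simpa [Fin.ext_iff] using hab)
  calc {k : Fin n → ℕ | StrictMono k ∧ ∀ b, k b ≤ m}.ncard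
      = Nat.card {k : Fin n → ℕ // StrictMono k ∧ ∀ b, k b ≤ m} := by
        rw [← Nat.card_coe_set_eq]; rfl
    _ = Nat.card {s : Finset (Fin (m + 1)) // s.card = n} := Nat.card_congr E
    _ = (m + 1).choose n := by
        rw [Nat.card_eq_fintype_card, Fintype.card_finset_len, Fintype.card_fin]

/-- Uniformized version of a `Fin M → ℕ` function, as a function on `ℕ`. -/
def unif {M : ℕ} (f : Fin M → ℕ) : ℕ → ℕ := fun n =>
  if h : n < M then f ⟨n, h⟩ else 0

lemma unif_eq {M : ℕ} (f : Fin M → ℕ) (n : ℕ) (h : n < M) :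
    f ⟨n, h⟩ = unif f n := by rw [unif, dif_pos h]

lemma unif_eq' {M : ℕ} (f : Fin M → ℕ) (b : Fin M) : f b = unif f (b : ℕ) :=
  unif_eq f (b : ℕ) b.isLt

lemma unif_strictMono {M : ℕ} {f : Fin M → ℕ} (hf : StrictMono f)
    {a b : ℕ} (hb : b < M) (hab : a < b) : unif f a < unif f b := by
  rw [← unif_eq f a (by omega), ← unif_eq f b hb]
  exact hf (by simpa [Fin.lt_def] using hab)

lemma unif_mono {M : ℕ} {f : Fin M → ℕ} (hf : StrictMono f)
    {a b : ℕ} (hb : b < M) (hab : a ≤ b) : unif f a ≤ unif f b := by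
  rcases eq_or_lt_of_le hab with rfl | h
  · exact le_rfl
  · exact le_of_lt (unif_strictMono hf hb h)

lemma unif_steps {M : ℕ} {f : Fin M → ℕ} (hf : StrictMono f)
    {a b : ℕ} (hb : b < M) (hab : a < b) : unif f a + (b - a) ≤ unif f b := by
  induction b with
  | zero => omega
  | succ c ih =>
    rcases lt_or_ge a c with h | h
    · have h1 := ih (by omega) h
      have h2 := unif_strictMono hf hb (Nat.lt_succ_self c)
      omega
    · have hac : a = c := by omega
      subst hac
      have := unif_strictMono hf hb (Nat.lt_succ_self a)
      omega

lemma emb_le' (α : Fin N) (p : (Fin N → ℕ) × ℕ) {x : ℕ} (hx : x < N + 1)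
    (h : x ≤ (α : ℕ)) : emb α p ⟨x, hx⟩ = unif p.1 x := by
  simp only [emb, unif]
  rw [dif_pos h, dif_pos (by omega : x < N)]

lemma emb_le (α : Fin N) (p : (Fin N → ℕ) × ℕ) (b : Fin (N + 1))
    (h : (b : ℕ) ≤ (α : ℕ)) : emb α p b = unif p.1 (b : ℕ) :=
  emb_le' α p b.isLt h

lemma emb_mid' (α : Fin N) (p : (Fin N → ℕ) × ℕ) {x : ℕ} (hx : x < N + 1)
    (h : x = (α : ℕ) + 1) : emb α p ⟨x, hx⟩ = p.2 + 1 := by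
  simp only [emb]
  rw [dif_neg (by omega), if_pos h]

lemma emb_mid (α : Fin N) (p : (Fin N → ℕ) × ℕ) (b : Fin (N + 1))
    (h : (b : ℕ) = (α : ℕ) + 1) : emb α p b = p.2 + 1 :=
  emb_mid' α p b.isLt h

lemma emb_gt' (α : Fin N) (p : (Fin N → ℕ) × ℕ) {x : ℕ} (hx : x < N + 1)
    (h : (α : ℕ) + 1 < x) : emb α p ⟨x, hx⟩ = unif p.1 (x - 1) + 1 := by
  simp only [emb, unif]
  rw [dif_neg (by omega), if_neg (by omega), dif_pos (by omega : x - 1 < N)]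

lemma emb_gt (α : Fin N) (p : (Fin N → ℕ) × ℕ) (b : Fin (N + 1))
    (h : (α : ℕ) + 1 < (b : ℕ)) : emb α p b = unif p.1 ((b : ℕ) - 1) + 1 :=
  emb_gt' α p b.isLt h

lemma maps_aux (α : Fin N) {p : (Fin N → ℕ) × ℕ} (hp : p ∈ Sset d α) :
    StrictMono (emb α p) ∧ ∀ b, emb α p b ≤ d + 1 := by
  obtain ⟨⟨hsm, hbd, hj, h0⟩, hα, hnext⟩ := hp
  have hαN := α.isLt
  have hα2 : unif p.1 (α : ℕ) ≤ p.2 := by rw [← unif_eq p.1 _ hαN]; exact hα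
  have hbd' : ∀ n, n < N → unif p.1 n ≤ d := fun n hn => by
    rw [← unif_eq p.1 n hn]; exact hbd _
  have hnext' : (α : ℕ) + 1 < N → p.2 < unif p.1 ((α : ℕ) + 1) := fun h => by
    rw [← unif_eq p.1 _ h]; exact hnext h
  constructor
  · intro a b hab
    have hab' : (a : ℕ) < (b : ℕ) := hab
    have haN := a.isLt; have hbN := b.isLt
    rcases le_or_gt (b : ℕ) (α : ℕ) with hb | hb
    · rw [emb_le α p a (by omega), emb_le α p b hb]
      exact unif_strictMono hsm (by omega) hab'
    · rcases le_or_gt (a : ℕ) (α : ℕ) with ha | ha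
      · -- a in first region
        rcases eq_or_lt_of_le (show (α : ℕ) + 1 ≤ (b : ℕ) by omega) with hb2 | hb2
        · rw [emb_le α p a ha, emb_mid α p b hb2.symm]
          have := unif_mono hsm (b := (α : ℕ)) hαN ha
          omega
        · rw [emb_le α p a ha, emb_gt α p b hb2]
          have := unif_mono hsm (a := (a : ℕ)) (b := (b : ℕ) - 1) (by omega) (by omega)
          omega
      · rcases eq_or_lt_of_le (show (α : ℕ) + 1 ≤ (a : ℕ) by omega) with ha2 | ha2
        · -- a = α + 1
          rw [emb_mid α p a ha2.symm, emb_gt α p b (by omega)]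
          have h1 := hnext' (by omega)
          have h2 := unif_mono hsm (a := (α : ℕ) + 1) (b := (b : ℕ) - 1)
            (by omega) (by omega)
          omega
        · rw [emb_gt α p a ha2, emb_gt α p b (by omega)]
          have := unif_strictMono hsm (f := p.1) (a := (a : ℕ) - 1) (b := (b : ℕ) - 1)
            (by omega) (by omega)
          omega
  · intro b
    have hb := b.isLt
    rcases lt_trichotomy ((b : ℕ)) ((α : ℕ) + 1) with h1 | h1 | h1
    · rw [emb_le α p b (by omega)]
      have := hbd' (b : ℕ) (by omega); omega
    · rw [emb_mid α p b h1]; omega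
    · rw [emb_gt α p b h1]
      have := hbd' ((b : ℕ) - 1) (by omega); omega

lemma inj_aux (α : Fin N) : Set.InjOn (emb α) (Sset d α) := by
  intro p hp q hq hpq
  have hαN := α.isLt
  have key : ∀ (x : ℕ) (hx : x < N + 1), emb α p ⟨x, hx⟩ = emb α q ⟨x, hx⟩ :=
    fun x hx => congrFun hpq ⟨x, hx⟩
  have h2 : p.2 = q.2 := by
    have := key ((α : ℕ) + 1) (by omega)
    rw [emb_mid' α p _ rfl, emb_mid' α q _ rfl] at this
    omega
  have h1 : p.1 = q.1 := by
    funext b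
    have hbN := b.isLt
    rw [unif_eq' p.1 b, unif_eq' q.1 b]
    rcases le_or_gt (b : ℕ) (α : ℕ) with hb | hb
    · have := key (b : ℕ) (by omega)
      rw [emb_le' α p _ hb, emb_le' α q _ hb] at this
      exact this
    · have := key ((b : ℕ) + 1) (by omega)
      rw [emb_gt' α p _ (by omega), emb_gt' α q _ (by omega)] at this
      simp only [Nat.add_sub_cancel] at this
      omega
  exact Prod.ext h1 h2

lemma surj_aux (α : Fin N) :
    Set.SurjOn (emb α) (Sset d α)
      {k : Fin (N + 1) → ℕ | StrictMono k ∧ ∀ b, k b ≤ d + 1} := by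
  intro k hk
  obtain ⟨hsm, hbd⟩ := hk
  have hα := α.isLt
  have hbd' : ∀ n, n < N + 1 → unif k n ≤ d + 1 := fun n hn => by
    rw [← unif_eq k n hn]; exact hbd _
  have hpos : ∀ b : ℕ, b < N + 1 → 0 < b → 1 ≤ unif k b := by
    intro b hb h
    have h1 := unif_steps hsm hb h
    omega
  refine ⟨(fun b => if (b : ℕ) ≤ (α : ℕ) then unif k (b : ℕ) else unif k ((b : ℕ) + 1) - 1,
     unif k ((α : ℕ) + 1) - 1), ⟨⟨?_, ?_, ?_, ?_⟩, ?_, ?_⟩, ?_⟩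
  · -- StrictMono
    intro a b hab
    have hab' : (a : ℕ) < (b : ℕ) := hab
    have haN := a.isLt; have hbN := b.isLt
    dsimp only
    rcases le_or_gt (b : ℕ) (α : ℕ) with hb | hb
    · rw [if_pos (by omega), if_pos hb]
      exact unif_strictMono hsm (by omega) hab'
    · rcases le_or_gt (a : ℕ) (α : ℕ) with ha | ha
      · rw [if_pos ha, if_neg (by omega)]
        have := unif_steps hsm (f := k) (a := (a : ℕ)) (b := (b : ℕ) + 1)
          (by omega) (by omega)
        omega
      · rw [if_neg (by omega), if_neg (by omega)]
        have := unif_steps hsm (f := k) (a := (a : ℕ) + 1) (b := (b : ℕ) + 1)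
          (by omega) (by omega)
        have := hpos ((a : ℕ) + 1) (by omega) (by omega)
        omega
  · -- bounds
    intro a
    have haN := a.isLt
    dsimp only
    rcases le_or_gt (a : ℕ) (α : ℕ) with ha | ha
    · rw [if_pos ha]
      have := unif_steps hsm (f := k) (a := (a : ℕ)) (b := N) (by omega) (by omega)
      have := hbd' N (by omega)
      omega
    · rw [if_neg (by omega)]
      have := hbd' ((a : ℕ) + 1) (by omega)
      omega
  · -- second component bounded
    have := hbd' ((α : ℕ) + 1) (by omega)
    dsimp only; omega
  · -- i₁ ≤ j
    intro a ha
    dsimp only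
    rw [if_pos (by omega)]
    have := unif_steps hsm (f := k) (a := (a : ℕ)) (b := (α : ℕ) + 1)
      (by omega) (by omega)
    omega
  · -- value at α is ≤ second component
    dsimp only
    rw [if_pos le_rfl]
    have := unif_steps hsm (f := k) (a := (α : ℕ)) (b := (α : ℕ) + 1)
      (by omega) (by omega)
    omega
  · -- second component < value at α+1
    intro h
    dsimp only
    rw [if_neg (by simp)]
    have := unif_steps hsm (f := k) (a := (α : ℕ) + 1) (b := (α : ℕ) + 1 + 1)
      (by omega) (by omega)
    have := hpos ((α : ℕ) + 1) (by omega) (by omega)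
    omega
  · -- emb of this pair is k
    funext b
    have hbN := b.isLt
    rw [unif_eq' k b]
    rcases lt_trichotomy ((b : ℕ)) ((α : ℕ) + 1) with h1 | h1 | h1
    · rw [emb_le α _ b (by omega), ← unif_eq _ (b : ℕ) (show (b : ℕ) < N by omega)]
      dsimp only
      rw [if_pos (show (b : ℕ) ≤ (α : ℕ) by omega)]
    · rw [emb_mid α _ b h1]
      dsimp only
      rw [show (α : ℕ) + 1 = (b : ℕ) from h1.symm]
      have := hpos (b : ℕ) hbN (by omega)
      omega
    · rw [emb_gt α _ b h1, ← unif_eq _ ((b : ℕ) - 1) (show (b : ℕ) - 1 < N by omega)]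
      dsimp only
      rw [if_neg (show ¬ (b : ℕ) - 1 ≤ (α : ℕ) by omega)]
      have e : (b : ℕ) - 1 + 1 = (b : ℕ) := by omega
      rw [e]
      have := hpos (b : ℕ) hbN (by omega)
      omega

lemma disj_aux {α β : Fin N} (hαβ : α < β) {p : (Fin N → ℕ) × ℕ}
    (hpα : p ∈ Sset d α) (hpβ : p ∈ Sset d β) : False := by
  obtain ⟨⟨hsm, -, -, -⟩, -, hnextα⟩ := hpα
  obtain ⟨-, hβ, -⟩ := hpβ
  have hαβ' : (α : ℕ) < (β : ℕ) := hαβ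
  have hβN := β.isLt
  have h1 : (α : ℕ) + 1 < N := by omega
  have h2 := hnextα h1
  have h3 : p.1 ⟨(α : ℕ) + 1, h1⟩ ≤ p.1 β :=
    hsm.monotone (by simp [Fin.le_def]; omega)
  omega

end aux

/-- proof of Lemma 2.4 of the paper. The sets `S₁,…,S_N` partition the set of
semistandard pairs; for each `α` the map `(i,j) ↦ (i₁,…,i_α, j+1, i_{α+1}+1,…,i_N+1)` is a
bijection from `S_α` onto the strictly increasing multi-indices in `I(d+1, N+1)`; in particular
each `S_α` has cardinality `C(d+2, N+1)`. -/
theorem statement4 (N d : ℕ) (hN : 0 < N) :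
    (⋃ α : Fin N, Sset d α) = {p : (Fin N → ℕ) × ℕ | IsSS d p} ∧
    (∀ α β : Fin N, α ≠ β → Disjoint (Sset d α) (Sset d β)) ∧
    (∀ α : Fin N, Set.BijOn (emb α) (Sset d α)
      {k : Fin (N + 1) → ℕ | StrictMono k ∧ ∀ b, k b ≤ d + 1}) ∧
    (∀ α : Fin N, (Sset d α).ncard = (d + 2).choose (N + 1)) := by
  have hbij : ∀ α : Fin N, Set.BijOn (emb α) (Sset d α)
      {k : Fin (N + 1) → ℕ | StrictMono k ∧ ∀ b, k b ≤ d + 1} := by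
    intro α
    exact ⟨fun p hp => ⟨(maps_aux α hp).1, (maps_aux α hp).2⟩, inj_aux α, surj_aux α⟩
  refine ⟨?_, ?_, hbij, ?_⟩
  · ext p
    simp only [Set.mem_iUnion, Set.mem_setOf_eq]
    constructor
    · rintro ⟨α, hα⟩
      exact hα.1
    · intro hp
      set F := Finset.univ.filter fun a : Fin N => p.1 a ≤ p.2 with hF
      have hne : F.Nonempty :=
        ⟨⟨0, hN⟩, by simp [hF, hp.2.2.2 ⟨0, hN⟩ rfl]⟩
      set α := F.max' hne with hα
      have hmemα : p.1 α ≤ p.2 := by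
        have := F.max'_mem hne
        simp only [hF, Finset.mem_filter] at this
        exact this.2
      refine ⟨α, hp, hmemα, ?_⟩
      intro h
      by_contra hcon
      push_neg at hcon
      have hmem : (⟨(α : ℕ) + 1, h⟩ : Fin N) ∈ F := by
        simp only [hF, Finset.mem_filter]
        exact ⟨Finset.mem_univ _, hcon⟩
      have := F.le_max' _ hmem
      rw [← hα] at this
      simp only [Fin.le_def] at this
      omega
  · intro α β hne
    rw [Set.disjoint_left]
    intro p hpα hpβ
    rcases hne.lt_or_gt with h | h
    · exact disj_aux h hpα hpβ
    · exact disj_aux h hpβ hpα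
  · intro α
    rw [← Set.ncard_image_of_injOn (hbij α).injOn, (hbij α).image_eq]
    exact card_strictMono_bounded (N + 1) (d + 1)

end
end

section
/- Let F be a field, N ≥ 1 and d ≥ 0. The vector space Δ^{(2,1^{N−1})}Sym^d E = ker(μ_N : ⋀^N Sym^d E ⊗ Sym^d E → ⋀^{N+1} Sym^d E) has dimension N·C(d+2, N+1) over F. -/
open MvPolynomial TensorProduct

set_option maxHeartbeats 1000000
set_option synthInstance.maxHeartbeats 400000

noncomputable section

variable (F : Type*) [Field F]

open TensorProduct in
noncomputable instance kerMuAddCommGroup (F : Type*) [Field F] (c N : ℕ) :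
    AddCommGroup ↥(LinearMap.ker (mu F c N)) :=
  letI big : AddCommGroup ((⋀[F]^N (Sym' F c)) ⊗[F] (Sym' F c)) := inferInstance
  letI mod : Module F ((⋀[F]^N (Sym' F c)) ⊗[F] (Sym' F c)) := inferInstance
  @Submodule.addCommGroup F _ _ big mod _

open TensorProduct in
noncomputable instance kerMuModule (F : Type*) [Field F] (c N : ℕ) :
    Module F ↥(LinearMap.ker (mu F c N)) :=
  letI big : AddCommGroup ((⋀[F]^N (Sym' F c)) ⊗[F] (Sym' F c)) := inferInstance
  letI mod : Module F ((⋀[F]^N (Sym' F c)) ⊗[F] (Sym' F c)) := inferInstance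
  @Submodule.module F _ _ big.toAddCommMonoid mod _


section ExtAux
open ExteriorAlgebra




/-- degrees of fintype-indexed finsupp -/
lemma degree_fin2 (d : Fin 2 →₀ ℕ) : d.degree = d 0 + d 1 := by
  rw [Finsupp.degree_apply, Finset.sum_subset (Finset.subset_univ d.support)
    (by intro x _ hx; simpa [Finsupp.mem_support_iff] using (by simpa using hx))]
  simp [Fin.sum_univ_two]

def degEquiv (c : ℕ) : {d : Fin 2 →₀ ℕ // d.degree = c} ≃ Fin (c + 1) where
  toFun d := ⟨d.1 1, by have := degree_fin2 d.1; have := d.2; omega⟩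
  invFun i := ⟨Finsupp.single (0 : Fin 2) (c - (i : ℕ)) + Finsupp.single (1 : Fin 2) (i : ℕ),
    by rw [degree_fin2]; simp [Finsupp.single_apply]; omega⟩
  left_inv d := by
    ext a
    have h2 := degree_fin2 d.1
    have hc := d.2
    fin_cases a <;> simp [Finsupp.single_apply] <;> omega
  right_inv i := by
    ext
    simp [Finsupp.single_apply]

lemma sym_equiv (F : Type*) [Field F] (c : ℕ) :
    Nonempty ((Sym' F c) ≃ₗ[F] ({d : Fin 2 →₀ ℕ | d.degree = c} →₀ F)) := by
  refine ⟨?_⟩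
  exact (LinearEquiv.ofEq _ _ (homogeneousSubmodule_eq_finsupp_supported (Fin 2) F c)) ≪≫ₗ AddMonoidAlgebra.supportedEquivFinsupp _

instance symFD (F : Type*) [Field F] (c : ℕ) : FiniteDimensional F (Sym' F c) := by
  obtain ⟨e⟩ := sym_equiv F c
  haveI : Fintype {d : Fin 2 →₀ ℕ | d.degree = c} := Fintype.ofEquiv _ (degEquiv c).symm
  exact Module.Finite.equiv (e.trans (Finsupp.linearEquivFunOnFinite F F _)).symm

lemma finrank_sym (F : Type*) [Field F] (c : ℕ) :
    Module.finrank F (Sym' F c) = c + 1 := by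
  obtain ⟨e⟩ := sym_equiv F c
  haveI : Fintype {d : Fin 2 →₀ ℕ | d.degree = c} := Fintype.ofEquiv _ (degEquiv c).symm
  rw [e.finrank_eq, Module.finrank_finsupp_self, ← Fintype.card_fin (c+1)]
  exact Fintype.card_congr (degEquiv c)



variable {R : Type*} [Field R] {M : Type*} [AddCommGroup M] [Module R M]
variable {n N : ℕ}

/-- dual functional detecting the wedge of basis vectors indexed by `t`. -/
def dualAlt (b : Module.Basis (Fin n) R M) (N : ℕ) (t : {s : Finset (Fin n) // s.card = N}) :
    M [⋀^Fin N]→ₗ[R] R :=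
  (Matrix.detRowAlternating : ((Fin N → R)) [⋀^Fin N]→ₗ[R] R).compLinearMap
    (LinearMap.pi fun a => b.coord (t.1.orderIsoOfFin t.2 a))

lemma dualAlt_apply (b : Module.Basis (Fin n) R M) (N : ℕ) (s t : {s : Finset (Fin n) // s.card = N}) :
    dualAlt b N t (fun a => b (s.1.orderIsoOfFin s.2 a)) = if s = t then 1 else 0 := by
  rw [dualAlt, AlternatingMap.compLinearMap_apply]
  have hmat : (fun i => (LinearMap.pi fun a => b.coord (t.1.orderIsoOfFin t.2 a))
      (b (s.1.orderIsoOfFin s.2 i)))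
      = fun i a => if (s.1.orderIsoOfFin s.2 i : Fin n) = (t.1.orderIsoOfFin t.2 a : Fin n)
          then (1:R) else 0 := by
    funext i a
    simp [LinearMap.pi_apply, Module.Basis.coord_apply, Module.Basis.repr_self, Finsupp.single_apply]
    congr 1
  rw [hmat]
  by_cases hst : s = t
  · subst hst
    simp only [if_pos rfl]
    have : (fun i a => if (s.1.orderIsoOfFin s.2 i : Fin n) = (s.1.orderIsoOfFin s.2 a : Fin n)
        then (1:R) else 0) = (1 : Matrix (Fin N) (Fin N) R) := by
      funext i a
      rw [Matrix.one_apply]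
      congr 1
      simp only [eq_iff_iff]
      constructor
      · intro h; exact (Finset.orderIsoOfFin _ s.2).injective (Subtype.ext h)
      · rintro rfl; rfl
    rw [this]
    exact Matrix.det_one
  · rw [if_neg hst]
    -- there is an element of s not in t
    have hsub : ¬ (s.1 ⊆ t.1) := by
      intro h
      exact hst (Subtype.ext (Finset.eq_of_subset_of_card_le h (by rw [s.2, t.2])))
    obtain ⟨x, hxs, hxt⟩ := Finset.not_subset.mp hsub
    obtain ⟨i, hi⟩ := (Finset.orderIsoOfFin s.1 s.2).surjective ⟨x, hxs⟩
    apply Matrix.det_eq_zero_of_row_eq_zero i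
    intro a
    have : ((s.1.orderIsoOfFin s.2 i : Fin n)) ≠ (t.1.orderIsoOfFin t.2 a : Fin n) := by
      intro h
      apply hxt
      rw [← show ((s.1.orderIsoOfFin s.2 i : Fin n)) = x from congrArg Subtype.val hi] at *
      rw [h]
      exact (t.1.orderIsoOfFin t.2 a).2
    simp only [Finset.coe_orderIsoOfFin_apply] at this
    simp [this]

lemma indep_ιMulti_family (b : Module.Basis (Fin n) R M) (N : ℕ) :
    LinearIndependent R (ιMulti_family R N (M := M) b) := by
  rw [Fintype.linearIndependent_iff]
  intro g hg t
  have := congrArg (liftAlternating (R := R) (M := M) (N := R) (Pi.single N (dualAlt b N t))) hg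
  rw [map_sum, map_zero] at this
  simp only [map_smul] at this
  have heval : ∀ s : Set.powersetCard (Fin n) N,
      liftAlternating (Pi.single N (dualAlt b N t)) (ιMulti_family R N b s)
        = if s = t then 1 else 0 := by
    intro s
    rw [show ιMulti_family R N b s = ιMulti R N (fun a => b (s.1.orderIsoOfFin s.2 a)) from rfl,
      liftAlternating_apply_ιMulti, Pi.single_eq_same]
    exact dualAlt_apply b N s t
  simp only [heval, smul_ite, smul_zero, smul_eq_mul, mul_one, mul_ite, mul_zero,
    Finset.sum_ite_eq', Finset.mem_univ, if_true] at this
  exact this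

lemma span_ιMulti_family (b : Module.Basis (Fin n) R M) (N : ℕ) :
    Submodule.span R (Set.range (ιMulti_family R N (M := M) b)) =
      Submodule.span R (Set.range (ιMulti R N (M := M))) := by
  apply le_antisymm
  · apply Submodule.span_mono
    rintro _ ⟨s, rfl⟩
    exact ⟨_, rfl⟩
  · rw [Submodule.span_le]
    rintro _ ⟨v, rfl⟩
    have hv : ιMulti R N (M := M) v =
        ∑ r ∈ Fintype.piFinset (fun _ : Fin N => (Finset.univ : Finset (Fin n))),
          (∏ i, b.repr (v i) (r i)) • ιMulti R N (M := M) (fun i => b (r i)) := by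
      have expand : ιMulti R N (M := M) v
          = ιMulti R N (M := M) (fun i => ∑ j ∈ Finset.univ, b.repr (v i) j • b j) := by
        congr 1
        funext i
        exact (b.sum_repr (v i)).symm
      rw [expand]
      have h1 := (ιMulti R N (M := M)).toMultilinearMap.map_sum_finset
        (fun i j => b.repr (v i) j • b j) (fun _ => Finset.univ)
      simp only [AlternatingMap.coe_multilinearMap] at h1
      rw [h1]
      refine Finset.sum_congr rfl fun r _ => ?_
      have h2 := (ιMulti R N (M := M)).toMultilinearMap.map_smul_univ
        (fun i => b.repr (v i) (r i)) (fun i => b (r i))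
      simp only [AlternatingMap.coe_multilinearMap] at h2
      rw [h2]
    rw [hv]
    apply Submodule.sum_mem
    intro r _
    apply Submodule.smul_mem
    by_cases hr : Function.Injective r
    · set s : Finset (Fin n) := Finset.univ.image r with hs
      have hcard : s.card = N := by
        rw [hs, Finset.card_image_of_injective _ hr, Finset.card_univ, Fintype.card_fin]
      have hmem : ∀ i, r i ∈ s := fun i => Finset.mem_image_of_mem r (Finset.mem_univ i)
      let e1 : Fin N ≃ s := Equiv.ofBijective (fun i => ⟨r i, hmem i⟩)
        ⟨fun i j h => hr (congrArg Subtype.val h), by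
          rintro ⟨x, hx⟩
          obtain ⟨i, _, hi⟩ := Finset.mem_image.mp hx
          exact ⟨i, Subtype.ext hi⟩⟩
      let σ : Equiv.Perm (Fin N) := e1.trans (s.orderIsoOfFin hcard).toEquiv.symm
      have hσ : ∀ i, (s.orderIsoOfFin hcard (σ i) : Fin n) = r i := by
        intro i
        have h1 : s.orderIsoOfFin hcard (σ i) = e1 i :=
          (s.orderIsoOfFin hcard).toEquiv.apply_symm_apply (e1 i)
        rw [h1]
        rfl
      have hcomp : (fun i => b (r i))
          = (fun a => b ((s.orderIsoOfFin hcard a : Fin n))) ∘ σ := by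
        funext i
        simp only [Function.comp_apply, hσ]
      rw [hcomp]
      rw [AlternatingMap.map_perm]
      rw [Units.smul_def]
      have hmem2 : ExteriorAlgebra.ιMulti_family R N (M := M) b ⟨s, hcard⟩ ∈
          Submodule.span R (Set.range (ExteriorAlgebra.ιMulti_family R N (M := M) b)) :=
        Submodule.subset_span (Set.mem_range_self _)
      exact zsmul_mem hmem2 _
    · obtain ⟨i, j, hij, hne⟩ : ∃ i j, r i = r j ∧ i ≠ j := by
        simp only [Function.Injective, not_forall] at hr
        obtain ⟨i, j, h, hne⟩ := hr
        exact ⟨i, j, h, hne⟩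
      have h0 : ιMulti R N (M := M) (fun i => b (r i)) = 0 :=
        (ιMulti R N (M := M)).map_eq_zero_of_eq (fun i => b (r i)) (i := i) (j := j)
          (congrArg b hij) hne
      rw [h0]
      exact Submodule.zero_mem _

lemma span_eq_top_ext (b : Module.Basis (Fin n) R M) (N : ℕ) :
    Submodule.span R (Set.range fun s : {s : Finset (Fin n) // s.card = N} =>
      (⟨ιMulti_family R N (M := M) b s,
        ιMulti_range R N (Set.mem_range_self _)⟩ : ⋀[R]^N M)) = ⊤ := by
  apply Submodule.map_injective_of_injective (Submodule.injective_subtype (⋀[R]^N M))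
  rw [Submodule.map_span, Submodule.map_top, Submodule.range_subtype]
  rw [← Set.range_comp]
  have : ((⋀[R]^N M).subtype ∘ fun s : {s : Finset (Fin n) // s.card = N} =>
      (⟨ιMulti_family R N (M := M) b s, ιMulti_range R N (Set.mem_range_self _)⟩ : ⋀[R]^N M))
      = ιMulti_family R N (M := M) b := rfl
  rw [this]
  exact (span_ιMulti_family b N).trans (ιMulti_span_fixedDegree R N)

def extBasis (b : Module.Basis (Fin n) R M) (N : ℕ) :
    Module.Basis {s : Finset (Fin n) // s.card = N} R (⋀[R]^N M) :=
  Module.Basis.mk (v := fun s => (⟨ιMulti_family R N (M := M) b s,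
        ιMulti_range R N (Set.mem_range_self _)⟩ : ⋀[R]^N M))
    (by
      apply LinearIndependent.of_comp ((⋀[R]^N M).subtype)
      have : ((⋀[R]^N M).subtype ∘ fun s : {s : Finset (Fin n) // s.card = N} =>
          (⟨ιMulti_family R N (M := M) b s, ιMulti_range R N (Set.mem_range_self _)⟩ : ⋀[R]^N M))
          = ιMulti_family R N (M := M) b := rfl
      rw [this]
      exact indep_ιMulti_family b N)
    (by rw [span_eq_top_ext b N])

lemma card_subtype_card (N : ℕ) :
    Fintype.card {s : Finset (Fin n) // s.card = N} = n.choose N := by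
  rw [Fintype.card_subtype]
  have : (Finset.univ.filter fun s : Finset (Fin n) => s.card = N)
      = Finset.powersetCard N Finset.univ := by
    rw [Finset.powersetCard_eq_filter, Finset.powerset_univ]
  rw [this, Finset.card_powersetCard, Finset.card_univ, Fintype.card_fin]

lemma extFinite (b : Module.Basis (Fin n) R M) (N : ℕ) : Module.Finite R (⋀[R]^N M) :=
  Module.Finite.of_basis (extBasis b N)

lemma finrank_ext [FiniteDimensional R M] (N : ℕ) :
    Module.finrank R (⋀[R]^N M) = (Module.finrank R M).choose N := by
  let b := Module.finBasis R M
  rw [Module.finrank_eq_card_basis (extBasis b N), card_subtype_card]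

end ExtAux

section MuAux
open ExteriorAlgebra

lemma ιMulti_split {R : Type*} [Field R] {M : Type*} [AddCommGroup M] [Module R M]
    {N : ℕ} (v : Fin (N + 1) → M) :
    ιMulti R (N + 1) v = ιMulti R N (v ∘ Fin.castSucc) * ι R (v (Fin.last N)) := by
  rw [ιMulti_apply, ιMulti_apply, List.ofFn_succ', List.concat_eq_append, List.prod_append]
  simp [Function.comp]

lemma mu_tmul (F : Type*) [Field F] (c N : ℕ) (w : ⋀[F]^N (Sym' F c)) (u : Sym' F c) :
    ((mu F c N (w ⊗ₜ[F] u)) : ExteriorAlgebra F (Sym' F c)) =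
      (w : ExteriorAlgebra F (Sym' F c)) * ι F u := rfl

lemma mu_surjective (F : Type*) [Field F] (c N : ℕ) :
    LinearMap.range (mu F c N) = ⊤ := by
  apply Submodule.map_injective_of_injective
    (Submodule.injective_subtype (⋀[F]^(N + 1) (Sym' F c)))
  rw [Submodule.map_top, Submodule.range_subtype]
  apply le_antisymm (Submodule.map_subtype_le _ _)
  refine le_trans (le_of_eq (ιMulti_span_fixedDegree F (N + 1)).symm)
    (Submodule.span_le.mpr ?_)
  rintro _ ⟨v, rfl⟩
  refine ⟨mu F c N ((⟨ιMulti F N (v ∘ Fin.castSucc),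
      ιMulti_range F N (Set.mem_range_self _)⟩ : ⋀[F]^N (Sym' F c)) ⊗ₜ[F] v (Fin.last N)),
    LinearMap.mem_range_self _ _, ?_⟩
  exact (ιMulti_split v).symm

lemma choose_identity (d N : ℕ) :
    (d + 1).choose N * (d + 1) = (d + 1).choose (N + 1) + N * (d + 2).choose (N + 1) := by
  by_cases h : N ≤ d + 1
  · have pascal : (d + 2).choose (N + 1) = (d + 1).choose N + (d + 1).choose (N + 1) :=
      Nat.choose_succ_succ (d + 1) N
    have key : (d + 1).choose (N + 1) * (N + 1) = (d + 1).choose N * (d + 1 - N) :=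
      Nat.choose_succ_right_eq (d + 1) N
    calc (d + 1).choose N * (d + 1)
        = (d + 1).choose N * N + (d + 1).choose N * (d + 1 - N) := by
          rw [← Nat.mul_add, Nat.add_sub_cancel' h]
      _ = (d + 1).choose N * N + (d + 1).choose (N + 1) * (N + 1) := by rw [key]
      _ = (d + 1).choose (N + 1) + N * ((d + 1).choose N + (d + 1).choose (N + 1)) := by ring
      _ = (d + 1).choose (N + 1) + N * (d + 2).choose (N + 1) := by rw [pascal]
  · push_neg at h
    rw [Nat.choose_eq_zero_of_lt h, Nat.choose_eq_zero_of_lt (by omega),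
      Nat.choose_eq_zero_of_lt (by omega)]
    simp

end MuAux

/-- Proposition 2.5 of the paper. The space
`Δ^{(2,1^{N-1})} Sym^d E = ker (μ_N : ⋀^N Sym^d E ⊗ Sym^d E → ⋀^{N+1} Sym^d E)` has dimension
`N * C(d+2, N+1)` over `F`. -/
theorem statement5 (F : Type*) [Field F] (N d : ℕ) (hN : 0 < N) :
    Module.finrank F ↥(LinearMap.ker (mu F d N)) = N * (d + 2).choose (N + 1) := by
  classical
  haveI : FiniteDimensional F (Sym' F d) := symFD F d
  have hS : Module.finrank F (Sym' F d) = d + 1 := finrank_sym F d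
  haveI hf1 : Module.Finite F (⋀[F]^N (Sym' F d)) :=
    extFinite (Module.finBasis F (Sym' F d)) N
  haveI hf2 : Module.Finite F (⋀[F]^(N+1) (Sym' F d)) :=
    extFinite (Module.finBasis F (Sym' F d)) (N+1)
  have hE : Module.finrank F (⋀[F]^N (Sym' F d)) = (d + 1).choose N := by
    rw [finrank_ext (R := F) (M := Sym' F d) N, hS]
  have hE1 : Module.finrank F (⋀[F]^(N+1) (Sym' F d)) = (d + 1).choose (N + 1) := by
    rw [finrank_ext (R := F) (M := Sym' F d) (N + 1), hS]
  have hT : Module.finrank F ((⋀[F]^N (Sym' F d)) ⊗[F] (Sym' F d))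
      = (d + 1).choose N * (d + 1) := by
    rw [Module.finrank_tensorProduct, hE, hS]
  haveI : Module.Finite F ((⋀[F]^N (Sym' F d)) ⊗[F] (Sym' F d)) :=
    Module.Finite.tensorProduct F _ _
  have hrn := LinearMap.finrank_range_add_finrank_ker (K := F)
    (V := (⋀[F]^N (Sym' F d)) ⊗[F] (Sym' F d)) (V₂ := ⋀[F]^(N + 1) (Sym' F d)) (mu F d N)
  rw [mu_surjective, finrank_top, hT, hE1] at hrn
  have hid := choose_identity d N
  omega

end
end

section
/- The vectors F_Δ(i,j), as (i,j) ranges over all semistandard pairs in I(d,N) × {0,1,…,d}, form a basis of the vector space Δ^{(2,1^{N−1})}Sym^d E = ker μ_N. -/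
open MvPolynomial TensorProduct

set_option maxHeartbeats 1000000
set_option synthInstance.maxHeartbeats 400000

noncomputable section

variable (F : Type*) [Field F]

namespace S6
open ExteriorAlgebra

variable (F : Type*) [Field F]

/-- exponent multi-index of `X^(d-j) Y^j` -/
def mIdx (d j : ℕ) : Fin 2 →₀ ℕ := Finsupp.single 0 (d - j) + Finsupp.single 1 j

lemma mIdx_inj {d i j : ℕ} (hi : i ≤ d) (hj : j ≤ d) (h : mIdx d i = mIdx d j) : i = j := by
  have := DFunLike.congr_fun h 1
  simpa [mIdx, Finsupp.single_apply] using this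

/-- coordinate functional on `Sym' F d` -/
def coord (d j : ℕ) : Sym' F d →ₗ[F] F :=
  (MvPolynomial.lcoeff F (mIdx d j)).comp (Submodule.subtype _)

lemma XY_coe (d : ℕ) {i : ℕ} (hi : i ≤ d) :
    (XY F d i : MvPolynomial (Fin 2) F) = MvPolynomial.monomial (mIdx d i) 1 := by
  rw [XY, dif_pos hi]
  simp [mIdx, MvPolynomial.X_pow_eq_monomial, MvPolynomial.monomial_mul]

lemma coord_XY (d : ℕ) {i j : ℕ} (hi : i ≤ d) (hj : j ≤ d) :
    coord F d j (XY F d i) = if i = j then 1 else 0 := by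
  rw [coord]
  simp only [LinearMap.comp_apply, Submodule.coe_subtype, XY_coe F d hi]
  rw [MvPolynomial.lcoeff_apply, MvPolynomial.coeff_monomial]
  by_cases h : i = j
  · subst h; simp
  · rw [if_neg (fun he => h (mIdx_inj hi hj he)), if_neg h]

lemma mem_span_subtype {M : Type*} [AddCommGroup M] [Module F M] {W : Submodule F M}
    {ι : Type*} (f : ι → W) (x : W) :
    x ∈ Submodule.span F (Set.range f) ↔
      (x : M) ∈ Submodule.span F (Set.range fun i => (f i : M)) := by
  have h1 : (Set.range fun i => (f i : M)) = W.subtype '' Set.range f := by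
    rw [← Set.range_comp]; rfl
  rw [h1, ← Submodule.map_span, Submodule.mem_map]
  constructor
  · exact fun h => ⟨x, h, rfl⟩
  · rintro ⟨y, hy, hxy⟩
    rwa [show y = x from Subtype.ext hxy] at hy

lemma spanXY (d : ℕ) :
    Submodule.span F (Set.range fun j : Fin (d+1) => XY F d (j : ℕ)) = ⊤ := by
  rw [eq_top_iff]
  rintro x -
  rw [mem_span_subtype]
  obtain ⟨P, hP⟩ := x
  rw [MvPolynomial.mem_homogeneousSubmodule] at hP
  show (P : MvPolynomial (Fin 2) F) ∈ _
  rw [← MvPolynomial.support_sum_monomial_coeff P]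
  refine Submodule.sum_mem _ fun m hm => ?_
  have hdeg : m 0 + m 1 = d := by
    have h1 : m.degree = d := by
      by_contra h
      exact MvPolynomial.mem_support_iff.mp hm (hP.coeff_eq_zero h)
    rw [← h1, Finsupp.degree_apply]
    rw [Finset.sum_subset (Finset.subset_univ m.support)
      (fun i _ hi => Finsupp.notMem_support_iff.mp hi)]
    exact Fin.sum_univ_two m
  have hm1 : m 1 ≤ d := by omega
  have hmeq : m = mIdx d (m 1) := by
    ext a
    fin_cases a <;> simp [mIdx, Finsupp.single_apply] <;> omega
  have : (MvPolynomial.monomial m) (MvPolynomial.coeff m P) =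
      MvPolynomial.coeff m P • (XY F d (m 1) : MvPolynomial (Fin 2) F) := by
    rw [XY_coe F d hm1, MvPolynomial.smul_monomial, smul_eq_mul, mul_one]
    exact congrArg (fun n => (MvPolynomial.monomial n) (MvPolynomial.coeff m P)) hmeq
  rw [this]
  exact Submodule.smul_mem _ _ (Submodule.subset_span ⟨⟨m 1, by omega⟩, rfl⟩)

lemma exists_rep (d : ℕ) (v : Sym' F d) :
    ∃ c : Fin (d+1) → F, ∑ j, c j • XY F d (j : ℕ) = v :=
  (Submodule.mem_span_range_iff_exists_fun F).mp (by rw [spanXY]; trivial)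

end S6
namespace S6
open ExteriorAlgebra

variable (F : Type*) [Field F]

/-- dual functional on the exterior algebra given by a minor determinant -/
def lam (d : ℕ) {r : ℕ} (t : Fin r → ℕ) : ExteriorAlgebra F (Sym' F d) →ₗ[F] F :=
  ExteriorAlgebra.liftAlternating
    (Function.update 0 r
      ((Matrix.detRowAlternating).compLinearMap (LinearMap.pi fun b => coord F d (t b))))

lemma lam_iotaMulti (d : ℕ) {r : ℕ} (t : Fin r → ℕ) (v : Fin r → Sym' F d) :
    lam F d t (ιMulti F r v) =
      Matrix.det (Matrix.of fun a b => coord F d (t b) (v a)) := by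
  rw [lam, liftAlternating_apply_ιMulti, Function.update_self]
  rfl

lemma strictMono_eq_of_range {r : ℕ} {u t : Fin r → ℕ} (hu : StrictMono u) (ht : StrictMono t)
    (h : ∀ a, ∃ b, t a = u b) : t = u := by
  have hsub : Finset.image t Finset.univ ⊆ Finset.image u Finset.univ := by
    intro x hx
    obtain ⟨a, _, rfl⟩ := Finset.mem_image.mp hx
    obtain ⟨b, hb⟩ := h a
    exact Finset.mem_image.mpr ⟨b, Finset.mem_univ b, hb.symm⟩
  have hcard : (Finset.image u Finset.univ).card ≤ (Finset.image t Finset.univ).card := by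
    rw [Finset.card_image_of_injective _ hu.injective,
      Finset.card_image_of_injective _ ht.injective]
  have heq := Finset.eq_of_subset_of_card_le hsub hcard
  have hrange : Set.range t = Set.range u := by
    rw [← Set.image_univ, ← Set.image_univ, ← Finset.coe_univ, ← Finset.coe_image,
      ← Finset.coe_image, heq]
  haveI : WellFoundedLT (Fin r) := inferInstance
  exact (StrictMono.range_inj (β := Fin r) (γ := ℕ) ht hu).mp hrange

lemma lam_delta (d : ℕ) {r : ℕ} {u t : Fin r → ℕ} (hu : StrictMono u) (hub : ∀ b, u b ≤ d)
    (ht : StrictMono t) (htb : ∀ a, t a ≤ d) :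
    lam F d u (ιMulti F r fun a => XY F d (t a)) = if t = u then 1 else 0 := by
  rw [lam_iotaMulti]
  have hM : ∀ a b, (Matrix.of fun a b => coord F d (u b) (XY F d (t a))) a b =
      if t a = u b then 1 else 0 := fun a b => coord_XY F d (htb a) (hub b)
  by_cases h : t = u
  · subst h
    rw [if_pos rfl]
    have : (Matrix.of fun a b => coord F d (t b) (XY F d (t a))) = 1 := by
      ext a b
      rw [hM, Matrix.one_apply]
      by_cases hab : a = b
      · simp [hab]
      · rw [if_neg (fun he => hab (ht.injective he)), if_neg hab]
    rw [this, Matrix.det_one]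
  · rw [if_neg h]
    by_cases hr : ∀ a, ∃ b, t a = u b
    · exact absurd (strictMono_eq_of_range hu ht hr) h
    · push_neg at hr
      obtain ⟨a, ha⟩ := hr
      apply Matrix.det_eq_zero_of_row_eq_zero a
      intro b
      rw [hM, if_neg (ha b)]

lemma wedge_coe (d : ℕ) {r : ℕ} (t : Fin r → ℕ) :
    (wedge F d t : ExteriorAlgebra F (Sym' F d)) = ιMulti F r fun a => XY F d (t a) := rfl

lemma iotaMulti_snoc (d : ℕ) {r : ℕ} (f : Fin r → Sym' F d) (v : Sym' F d) :
    ιMulti F (r+1) (Fin.snoc f v) = ιMulti F r f * ExteriorAlgebra.ι F v := by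
  rw [ιMulti_apply, ιMulti_apply, List.ofFn_succ']
  simp only [Function.comp, Fin.snoc_castSucc, Fin.snoc_last]
  rw [List.concat_eq_append, List.prod_append, List.prod_singleton]

lemma mu_tmul (d N : ℕ) (w : ⋀[F]^N (Sym' F d)) (v : Sym' F d) :
    ((mu F d N (w ⊗ₜ[F] v) : ⋀[F]^(N+1) (Sym' F d)) : ExteriorAlgebra F (Sym' F d)) =
      (w : ExteriorAlgebra F (Sym' F d)) * ExteriorAlgebra.ι F v := by
  rw [mu, TensorProduct.lift.tmul]
  rfl

lemma mu_Fp_coe (d N : ℕ) (i : Fin N → ℕ) (j : ℕ) :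
    ((mu F d N (Fp F d i j) : ⋀[F]^(N+1) (Sym' F d)) : ExteriorAlgebra F (Sym' F d)) =
      ιMulti F (N+1) (Fin.snoc (fun a => XY F d (i a)) (XY F d j)) := by
  rw [Fp, mu_tmul, wedge_coe, iotaMulti_snoc]

/-- the dual functional on the tensor product -/
def phi (d N : ℕ) (s : Fin N → ℕ) (j : ℕ) :
    ((⋀[F]^N (Sym' F d)) ⊗[F] (Sym' F d)) →ₗ[F] F :=
  TensorProduct.lift (LinearMap.mk₂ F
    (fun w v => lam F d s (w : ExteriorAlgebra F (Sym' F d)) * coord F d j v)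
    (fun w w' v => by simp [add_mul])
    (fun a w v => by simp only [SetLike.val_smul, map_smul, smul_eq_mul, mul_assoc])
    (fun w v v' => by simp [mul_add])
    (fun a w v => by simp only [map_smul, smul_eq_mul, mul_left_comm]))

lemma phi_Fp (d N : ℕ) {s i : Fin N → ℕ} {j j' : ℕ} (hs : StrictMono s) (hsb : ∀ a, s a ≤ d)
    (hj : j ≤ d) (hi : StrictMono i) (hib : ∀ a, i a ≤ d) (hj' : j' ≤ d) :
    phi F d N s j (Fp F d i j') = if i = s ∧ j' = j then 1 else 0 := by
  rw [Fp, phi, TensorProduct.lift.tmul, LinearMap.mk₂_apply, wedge_coe,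
    lam_delta F d hs hsb hi hib, coord_XY F d hj' hj]
  by_cases h1 : i = s <;> by_cases h2 : j' = j <;> simp [h1, h2]

end S6
namespace S6
open ExteriorAlgebra

variable (F : Type*) [Field F]

lemma Pmap_eq {N : ℕ} (hN : 0 < N) (p : (Fin N → ℕ) × ℕ) (h0 : p.1 ⟨0, hN⟩ ≤ p.2) :
    ∃ α : Fin N, p.1 α ≤ p.2 ∧ (∀ b, α < b → ¬ p.1 b ≤ p.2) ∧
      Pmap p = (Function.update p.1 α p.2, p.1 α) := by
  have hS : (Finset.univ.filter fun a : Fin N => p.1 a ≤ p.2).Nonempty :=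
    ⟨⟨0, hN⟩, by simpa using h0⟩
  refine ⟨(Finset.univ.filter fun a : Fin N => p.1 a ≤ p.2).max' hS, ?_, ?_, ?_⟩
  · have := Finset.max'_mem _ hS
    simpa using this
  · intro b hb hle
    exact absurd (Finset.le_max' _ b (by simpa using hle)) (not_le.mpr hb)
  · rw [Pmap, dif_pos hS]

lemma update_strictMono {N : ℕ} {i : Fin N → ℕ} (hi : StrictMono i) {α : Fin N} {j : ℕ}
    (h1 : i α < j) (h2 : ∀ b, α < b → j < i b) : StrictMono (Function.update i α j) := by
  intro a b hab
  by_cases ha : a = α <;> by_cases hb : b = α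
  · rw [ha, hb] at hab
    exact absurd hab (lt_irrefl _)
  · rw [ha, Function.update_self, Function.update_of_ne hb]
    exact h2 b (ha ▸ hab)
  · rw [hb, Function.update_self, Function.update_of_ne ha]
    exact lt_trans (hi (hb ▸ hab)) h1
  · rw [Function.update_of_ne ha, Function.update_of_ne hb]
    exact hi hab

lemma mu_FDelta_eq_zero {d N : ℕ} (hN : 0 < N) (p : (Fin N → ℕ) × ℕ) (hp : IsSS d p) :
    mu F d N (FDelta F d p) = 0 := by
  obtain ⟨hmono, hbd, hj, h0⟩ := hp
  by_cases h : ∃ a, p.1 a = p.2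
  · rw [FDelta, if_pos h]
    obtain ⟨a, ha⟩ := h
    rw [Subtype.ext_iff, ZeroMemClass.coe_zero, mu_Fp_coe]
    refine AlternatingMap.map_eq_zero_of_eq _ _ (i := Fin.castSucc a) (j := Fin.last N) ?_
      (Fin.castSucc_lt_last a).ne
    rw [Fin.snoc_castSucc, Fin.snoc_last, ha]
  · rw [FDelta, if_neg h]
    obtain ⟨α, hα1, hα2, hPm⟩ := Pmap_eq hN p (h0 ⟨0, hN⟩ rfl)
    have hlt : p.1 α < p.2 := lt_of_le_of_ne hα1 (fun e => h ⟨α, e⟩)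
    have hPm1 : (Pmap p).1 = Function.update p.1 α p.2 := by rw [hPm]
    have hPm2 : (Pmap p).2 = p.1 α := by rw [hPm]
    rw [map_add, hPm1, hPm2, Subtype.ext_iff, Submodule.coe_add, ZeroMemClass.coe_zero,
      mu_Fp_coe, mu_Fp_coe]
    have hswap : (Fin.snoc (fun a => XY F d (Function.update p.1 α p.2 a)) (XY F d (p.1 α))
        : Fin (N+1) → Sym' F d) =
        (Fin.snoc (fun a => XY F d (p.1 a)) (XY F d p.2) : Fin (N+1) → Sym' F d) ∘
          Equiv.swap (Fin.castSucc α) (Fin.last N) := by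
      funext b
      refine Fin.lastCases ?_ (fun c => ?_) b
      · rw [Fin.snoc_last, Function.comp_apply, Equiv.swap_apply_right, Fin.snoc_castSucc]
      · rw [Fin.snoc_castSucc, Function.comp_apply]
        rcases eq_or_ne c α with rfl | hc
        · rw [Equiv.swap_apply_left, Fin.snoc_last, Function.update_self]
        · rw [Equiv.swap_apply_of_ne_of_ne (fun he => hc (Fin.castSucc_injective _ he))
            (Fin.castSucc_lt_last c).ne, Fin.snoc_castSucc, Function.update_of_ne hc]
    rw [hswap, AlternatingMap.map_swap _ _ (Fin.castSucc_lt_last α).ne]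
    exact add_neg_cancel _

end S6
namespace S6
open ExteriorAlgebra

variable (F : Type*) [Field F]

/-- index type for the wedge basis -/
abbrev sIdx (d N : ℕ) : Type := {t : Fin N → ℕ // StrictMono t ∧ ∀ a, t a ≤ d}

/-- index type for the anti-semistandard pairs -/
abbrev aIdx (d N : ℕ) : Type :=
  {q : (Fin N → ℕ) × ℕ // StrictMono q.1 ∧ (∀ a, q.1 a ≤ d) ∧ q.2 ≤ d ∧ ∀ a, q.2 < q.1 a}

abbrev spanSS (d N : ℕ) : Submodule F ((⋀[F]^N (Sym' F d)) ⊗[F] (Sym' F d)) :=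
  Submodule.span F (Set.range fun p : {p : (Fin N → ℕ) × ℕ // IsSS d p} => FDelta F d p.1)

abbrev spanAnti (d N : ℕ) : Submodule F ((⋀[F]^N (Sym' F d)) ⊗[F] (Sym' F d)) :=
  Submodule.span F (Set.range fun q : aIdx d N => Fp F d q.1.1 q.1.2)

lemma iotaMulti_XY_mem (d N : ℕ) (r' : Fin N → ℕ) (hb : ∀ a, r' a ≤ d) :
    ιMulti F N (fun a => XY F d (r' a)) ∈ Submodule.span F
      (Set.range fun t : sIdx d N => (wedge F d t.1 : ExteriorAlgebra F (Sym' F d))) := by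
  by_cases hinj : Function.Injective r'
  · set σ := Tuple.sort r' with hσ
    have hsm : StrictMono (r' ∘ σ) :=
      (Tuple.monotone_sort r').strictMono_of_injective (hinj.comp σ.injective)
    have hfe : (fun a => XY F d (r' a)) =
        (fun a => XY F d ((r' ∘ σ) a)) ∘ (σ⁻¹ : Equiv.Perm (Fin N)) := by
      funext a
      simp
    rw [hfe, AlternatingMap.map_perm]
    rcases Int.units_eq_one_or (Equiv.Perm.sign σ⁻¹) with hs | hs <;> rw [hs]
    · rw [one_smul]
      exact Submodule.subset_span ⟨⟨r' ∘ σ, hsm, fun a => hb _⟩, rfl⟩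
    · rw [Units.neg_smul, one_smul]
      exact Submodule.neg_mem _ (Submodule.subset_span ⟨⟨r' ∘ σ, hsm, fun a => hb _⟩, rfl⟩)
  · obtain ⟨a, b, hab, hne⟩ := Function.not_injective_iff.mp hinj
    rw [AlternatingMap.map_eq_zero_of_eq _ _ (by rw [hab]) hne]
    exact Submodule.zero_mem _

lemma wedge_span (d N : ℕ) :
    Submodule.span F (Set.range fun t : sIdx d N => wedge F d t.1) = ⊤ := by
  rw [eq_top_iff]
  rintro x -
  rw [mem_span_subtype]
  have hx : (x : ExteriorAlgebra F (Sym' F d)) ∈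
      Submodule.span F (Set.range (ιMulti F N (M := Sym' F d))) := by
    rw [ιMulti_span_fixedDegree]
    exact x.2
  refine Submodule.span_le.mpr ?_ hx
  rintro _ ⟨v, rfl⟩
  choose c hc using fun a => exists_rep F d (v a)
  have hv : v = fun a => ∑ j, c a j • XY F d (j : ℕ) := by
    funext a
    rw [hc]
  rw [hv]
  have h1 : (ιMulti F N (M := Sym' F d)) (fun a => ∑ j : Fin (d+1), c a j • XY F d (j : ℕ)) =
      ∑ r : Fin N → Fin (d+1), (ιMulti F N (M := Sym' F d))
        (fun a => c a (r a) • XY F d ((r a : ℕ))) := by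
    have := (ιMulti F N (M := Sym' F d)).toMultilinearMap.map_sum
      (g := fun a (j : Fin (d+1)) => c a j • XY F d (j : ℕ))
    simpa using this
  rw [h1]
  refine Submodule.sum_mem _ fun r _ => ?_
  have h2 : (ιMulti F N (M := Sym' F d)) (fun a => c a (r a) • XY F d ((r a : ℕ))) =
      (∏ a, c a (r a)) • (ιMulti F N (M := Sym' F d)) (fun a => XY F d ((r a : ℕ))) := by
    have := (ιMulti F N (M := Sym' F d)).toMultilinearMap.map_smul_univ
      (fun a => c a (r a)) (fun a => XY F d ((r a : ℕ)))
    simpa using this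
  rw [h2]
  exact Submodule.smul_mem _ _ (iotaMulti_XY_mem F d N _ fun a => Nat.lt_succ_iff.mp (r a).isLt)

lemma Fp_mem (d N : ℕ) (hN : 0 < N) :
    ∀ j, j ≤ d → ∀ i : Fin N → ℕ, StrictMono i → (∀ a, i a ≤ d) →
      Fp F d i j ∈ spanSS F d N ⊔ spanAnti F d N := by
  intro j
  induction j using Nat.strong_induction_on with
  | _ j IH =>
    intro hj i hi hib
    by_cases hanti : ∀ a, j < i a
    · exact Submodule.mem_sup_right
        (Submodule.subset_span ⟨⟨(i, j), hi, hib, hj, hanti⟩, rfl⟩)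
    · push_neg at hanti
      obtain ⟨a0, ha0⟩ := hanti
      have h0 : i ⟨0, hN⟩ ≤ j :=
        le_trans (hi.monotone (by simp [Fin.le_def])) ha0
      have hss : IsSS d (i, j) := by
        refine ⟨hi, hib, hj, fun a hav => ?_⟩
        have ha : a = ⟨0, hN⟩ := Fin.ext hav
        rwa [ha]
      by_cases hdeg : ∃ a, i a = j
      · have hFd : FDelta F d (i, j) = Fp F d i j := by
          rw [FDelta, if_pos hdeg]
        exact hFd ▸ Submodule.mem_sup_left (Submodule.subset_span ⟨⟨(i, j), hss⟩, rfl⟩)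
      · obtain ⟨α, hα1, hα2, hPm⟩ := Pmap_eq hN (i, j) h0
        have hlt : i α < j := lt_of_le_of_ne hα1 (fun e => hdeg ⟨α, e⟩)
        have hgt : ∀ b, α < b → j < i b := fun b hb => not_le.mp (hα2 b hb)
        have hFd : Fp F d i j =
            FDelta F d (i, j) - Fp F d (Function.update i α j) (i α) := by
          rw [FDelta, if_neg hdeg, hPm]
          dsimp only
          abel
        rw [hFd]
        refine Submodule.sub_mem _
          (Submodule.mem_sup_left (Submodule.subset_span
            (Set.mem_range_self (f := fun p : {p : (Fin N → ℕ) × ℕ // IsSS d p} =>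
              FDelta F d p.1) ⟨(i, j), hss⟩)))
          (IH (i α) hlt (hib α) _ (update_strictMono hi hlt hgt) fun a => ?_)
        by_cases haα : a = α
        · rw [haα, Function.update_self]
          exact hj
        · rw [Function.update_of_ne haα]
          exact hib a

lemma sup_eq_top (d N : ℕ) (hN : 0 < N) : spanSS F d N ⊔ spanAnti F d N = ⊤ := by
  rw [eq_top_iff]
  rintro x -
  have hx : x ∈ Submodule.span F {t : (⋀[F]^N (Sym' F d)) ⊗[F] (Sym' F d) |
      ∃ m n, m ⊗ₜ n = t} := by
    rw [TensorProduct.span_tmul_eq_top]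
    trivial
  refine Submodule.span_le.mpr ?_ hx
  rintro _ ⟨m, n, rfl⟩
  have hm : m ∈ Submodule.span F (Set.range fun t : sIdx d N => wedge F d t.1) := by
    rw [wedge_span]
    trivial
  rw [Finsupp.mem_span_range_iff_exists_finsupp] at hm
  obtain ⟨cm, hcm⟩ := hm
  rw [← hcm, Finsupp.sum, TensorProduct.sum_tmul]
  refine Submodule.sum_mem _ fun t _ => ?_
  rw [← TensorProduct.smul_tmul']
  refine Submodule.smul_mem _ _ ?_
  obtain ⟨cn, hcn⟩ := exists_rep F d n
  rw [← hcn, TensorProduct.tmul_sum]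
  refine Submodule.sum_mem _ fun j _ => ?_
  rw [TensorProduct.tmul_smul]
  exact Submodule.smul_mem _ _
    (Fp_mem F d N hN (j : ℕ) (Nat.lt_succ_iff.mp j.isLt) t.1 t.2.1 t.2.2)

end S6
namespace S6
open ExteriorAlgebra

variable (F : Type*) [Field F]

lemma cons_strictMono {N : ℕ} {i : Fin N → ℕ} {j : ℕ} (hi : StrictMono i)
    (hj : ∀ a, j < i a) : StrictMono (Fin.cons j i : Fin (N+1) → ℕ) := by
  intro a b hab
  cases a using Fin.cases with
  | zero =>
    cases b using Fin.cases with
    | zero => exact absurd hab (lt_irrefl _)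
    | succ b' =>
      rw [Fin.cons_zero, Fin.cons_succ]
      exact hj b'
  | succ a' =>
    cases b using Fin.cases with
    | zero => exact absurd hab (Fin.not_lt_zero _)
    | succ b' =>
      rw [Fin.cons_succ, Fin.cons_succ]
      exact hi (Fin.succ_lt_succ_iff.mp hab)

lemma cons_inj_pair {N : ℕ} {i i' : Fin N → ℕ} {j j' : ℕ}
    (h : (Fin.cons j i : Fin (N+1) → ℕ) = Fin.cons j' i') : j = j' ∧ i = i' := by
  constructor
  · have := congrFun h 0
    simpa using this
  · funext a
    have := congrFun h a.succ
    simpa using this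

lemma spanSS_le_ker (d N : ℕ) (hN : 0 < N) :
    spanSS F d N ≤ LinearMap.ker (mu F d N) := by
  refine Submodule.span_le.mpr ?_
  rintro _ ⟨p, rfl⟩
  exact LinearMap.mem_ker.mpr (mu_FDelta_eq_zero F hN p.1 p.2)

lemma snoc_eq_cons_comp {N : ℕ} (d : ℕ) (i : Fin N → ℕ) (j : ℕ) :
    (Fin.snoc (fun a => XY F d (i a)) (XY F d j) : Fin (N+1) → Sym' F d) =
      (fun b => XY F d ((Fin.cons j i : Fin (N+1) → ℕ) b)) ∘ (finRotate (N+1)) := by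
  funext b
  refine Fin.lastCases ?_ (fun c => ?_) b
  · rw [Fin.snoc_last, Function.comp_apply, finRotate_last, Fin.cons_zero]
  · rw [Fin.snoc_castSucc, Function.comp_apply, finRotate_succ_apply,
      Fin.coeSucc_eq_succ, Fin.cons_succ]

lemma anti_eq_zero (d N : ℕ) {z : (⋀[F]^N (Sym' F d)) ⊗[F] (Sym' F d)}
    (hz : z ∈ spanAnti F d N) (hker : mu F d N z = 0) : z = 0 := by
  obtain ⟨l, hl⟩ := Finsupp.mem_span_range_iff_exists_finsupp.mp hz
  have hlz : ∀ q₀ : aIdx d N, l q₀ = 0 := by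
    intro q₀
    have hcons : ∀ q : aIdx d N, StrictMono (Fin.cons q.1.2 q.1.1 : Fin (N+1) → ℕ) :=
      fun q => cons_strictMono q.2.1 q.2.2.2.2
    have hconsb : ∀ q : aIdx d N, ∀ b, (Fin.cons q.1.2 q.1.1 : Fin (N+1) → ℕ) b ≤ d := by
      intro q b
      cases b using Fin.cases with
      | zero => exact q.2.2.2.1
      | succ c => exact q.2.2.1 c
    set ψ : (⋀[F]^(N+1) (Sym' F d)) →ₗ[F] F :=
      (lam F d (Fin.cons q₀.1.2 q₀.1.1 : Fin (N+1) → ℕ)).comp (Submodule.subtype _) with hψ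
    obtain ⟨ε, hε, hval⟩ : ∃ ε : F, ε ≠ 0 ∧ ∀ q : aIdx d N,
        ψ (mu F d N (Fp F d q.1.1 q.1.2)) =
          ε * (if (Fin.cons q.1.2 q.1.1 : Fin (N+1) → ℕ) = Fin.cons q₀.1.2 q₀.1.1
            then 1 else 0) := by
      have hbase : ∀ q : aIdx d N, ψ (mu F d N (Fp F d q.1.1 q.1.2)) =
          lam F d (Fin.cons q₀.1.2 q₀.1.1 : Fin (N+1) → ℕ)
            (ιMulti F (N+1) ((fun b => XY F d ((Fin.cons q.1.2 q.1.1 : Fin (N+1) → ℕ) b)) ∘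
              (finRotate (N+1)))) := by
        intro q
        rw [hψ, LinearMap.comp_apply, Submodule.coe_subtype, mu_Fp_coe, snoc_eq_cons_comp]
      rcases Int.units_eq_one_or (Equiv.Perm.sign (finRotate (N+1))) with hs | hs
      · refine ⟨1, one_ne_zero, fun q => ?_⟩
        rw [hbase q, AlternatingMap.map_perm, hs, one_smul,
          lam_delta F d (hcons q₀) (hconsb q₀) (hcons q) (hconsb q), one_mul]
      · refine ⟨-1, by norm_num, fun q => ?_⟩
        rw [hbase q, AlternatingMap.map_perm, hs, Units.neg_smul, one_smul, map_neg,
          lam_delta F d (hcons q₀) (hconsb q₀) (hcons q) (hconsb q)]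
        rw [neg_mul, one_mul]
    have h0 : ψ (mu F d N z) = 0 := by rw [hker, map_zero]
    rw [← hl, map_finsuppSum, map_finsuppSum] at h0
    simp only [map_smul, smul_eq_mul] at h0
    have h1 : (l.sum fun q a => a * ψ (mu F d N (Fp F d q.1.1 q.1.2))) = l q₀ * ε := by
      rw [Finsupp.sum]
      rw [Finset.sum_eq_single q₀]
      · by_cases hq : q₀ ∈ l.support
        · rw [hval q₀, if_pos rfl, mul_one]
        · rw [Finsupp.notMem_support_iff.mp hq, zero_mul, zero_mul]
      · intro q _ hq
        rw [hval q, if_neg, mul_zero, mul_zero]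
        intro he
        obtain ⟨h2, h1'⟩ := cons_inj_pair he
        exact hq (Subtype.ext (Prod.ext h1' h2))
      · intro hq
        rw [Finsupp.notMem_support_iff.mp hq, zero_mul]
    rw [h1] at h0
    rcases mul_eq_zero.mp h0 with h | h
    · exact h
    · exact absurd h hε
  have hl0 : l = 0 := Finsupp.ext hlz
  rw [← hl, hl0, Finsupp.sum_zero_index]

end S6
namespace S6
open ExteriorAlgebra

variable (F : Type*) [Field F]

lemma phi_FDelta_self (d N : ℕ) (hN : 0 < N) (p : {p : (Fin N → ℕ) × ℕ // IsSS d p}) :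
    phi F d N p.1.1 p.1.2 (FDelta F d p.1) = 1 := by
  obtain ⟨hmono, hbd, hj, h4⟩ := p.2
  by_cases hdeg : ∃ a, p.1.1 a = p.1.2
  · rw [FDelta, if_pos hdeg, phi_Fp F d N hmono hbd hj hmono hbd hj, if_pos ⟨rfl, rfl⟩]
  · obtain ⟨α, hα1, hα2, hPm⟩ := Pmap_eq hN p.1 (h4 ⟨0, hN⟩ rfl)
    have hlt : p.1.1 α < p.1.2 := lt_of_le_of_ne hα1 (fun e => hdeg ⟨α, e⟩)
    have hgt : ∀ b, α < b → p.1.2 < p.1.1 b := fun b hb => not_le.mp (hα2 b hb)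
    have hPm1 : (Pmap p.1).1 = Function.update p.1.1 α p.1.2 := by rw [hPm]
    have hPm2 : (Pmap p.1).2 = p.1.1 α := by rw [hPm]
    have hub : ∀ a, Function.update p.1.1 α p.1.2 a ≤ d := by
      intro a
      by_cases ha : a = α
      · rw [ha, Function.update_self]; exact hj
      · rw [Function.update_of_ne ha]; exact hbd a
    rw [FDelta, if_neg hdeg, map_add, hPm1, hPm2,
      phi_Fp F d N hmono hbd hj hmono hbd hj, if_pos ⟨rfl, rfl⟩,
      phi_Fp F d N hmono hbd hj (update_strictMono hmono hlt hgt) hub (hbd α),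
      if_neg, add_zero]
    rintro ⟨-, h2⟩
    exact hdeg ⟨α, h2⟩

lemma phi_FDelta_ne (d N : ℕ) (hN : 0 < N) (p q : {p : (Fin N → ℕ) × ℕ // IsSS d p})
    (hne : q ≠ p) (hlow : ¬ p.1.2 < q.1.2) :
    phi F d N p.1.1 p.1.2 (FDelta F d q.1) = 0 := by
  obtain ⟨hpmono, hpbd, hpj, hp4⟩ := p.2
  obtain ⟨hmono, hbd, hj, h4⟩ := q.2
  have hne1 : ¬ (q.1.1 = p.1.1 ∧ q.1.2 = p.1.2) := by
    rintro ⟨h1, h2⟩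
    exact hne (Subtype.ext (Prod.ext h1 h2))
  by_cases hdeg : ∃ a, q.1.1 a = q.1.2
  · rw [FDelta, if_pos hdeg, phi_Fp F d N hpmono hpbd hpj hmono hbd hj, if_neg hne1]
  · obtain ⟨α, hα1, hα2, hPm⟩ := Pmap_eq hN q.1 (h4 ⟨0, hN⟩ rfl)
    have hlt : q.1.1 α < q.1.2 := lt_of_le_of_ne hα1 (fun e => hdeg ⟨α, e⟩)
    have hgt : ∀ b, α < b → q.1.2 < q.1.1 b := fun b hb => not_le.mp (hα2 b hb)
    have hPm1 : (Pmap q.1).1 = Function.update q.1.1 α q.1.2 := by rw [hPm]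
    have hPm2 : (Pmap q.1).2 = q.1.1 α := by rw [hPm]
    have hub : ∀ a, Function.update q.1.1 α q.1.2 a ≤ d := by
      intro a
      by_cases ha : a = α
      · rw [ha, Function.update_self]; exact hj
      · rw [Function.update_of_ne ha]; exact hbd a
    rw [FDelta, if_neg hdeg, map_add, hPm1, hPm2,
      phi_Fp F d N hpmono hpbd hpj hmono hbd hj, if_neg hne1,
      phi_Fp F d N hpmono hpbd hpj (update_strictMono hmono hlt hgt) hub (hbd α),
      if_neg, add_zero]
    rintro ⟨-, h2⟩
    exact hlow (h2 ▸ hlt)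

lemma FDelta_indep (d N : ℕ) (hN : 0 < N) :
    LinearIndependent F
      (fun p : {p : (Fin N → ℕ) × ℕ // IsSS d p} => FDelta F d p.1) := by
  refine (linearIndependent_iff' (R := F)
    (v := fun p : {p : (Fin N → ℕ) × ℕ // IsSS d p} => FDelta F d p.1)).mpr ?_
  intro s g hsum p₀ hp₀
  have key : ∀ p ∈ s, (∀ q ∈ s, p.1.2 < q.1.2 → g q = 0) → g p = 0 := by
    intro p hp hhigh
    have h0 := congrArg (phi F d N p.1.1 p.1.2) hsum
    rw [map_sum, map_zero] at h0
    simp only [map_smul, smul_eq_mul] at h0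
    rw [Finset.sum_eq_single p] at h0
    · rwa [phi_FDelta_self F d N hN p, mul_one] at h0
    · intro q hq hqp
      by_cases hlow : p.1.2 < q.1.2
      · rw [hhigh q hq hlow, zero_mul]
      · rw [phi_FDelta_ne F d N hN p q hqp hlow, mul_zero]
    · intro hps
      exact absurd hp hps
  suffices H : ∀ n : ℕ, ∀ p ∈ s, d ≤ p.1.2 + n → g p = 0 by
    exact H d p₀ hp₀ (Nat.le_add_left d _)
  intro n
  induction n with
  | zero =>
    intro p hp hdn
    refine key p hp fun q hq hlt => ?_
    have h1 := q.2.2.2.1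
    have h2 := p.2.2.2.1
    omega
  | succ n IH =>
    intro p hp hdn
    refine key p hp fun q hq hlt => IH q hq (by omega)

end S6
/-- Proposition 2.5 of the paper. The vectors `F_Δ(i,j)`, for `(i,j)` ranging
over the semistandard pairs, form a basis of `Δ^{(2,1^{N-1})} Sym^d E = ker μ_N`: they are
linearly independent and they span the kernel of `μ_N`. -/
theorem statement6 (F : Type*) [Field F] (N d : ℕ) (hN : 0 < N) :
    LinearIndependent F
      (fun p : {p : (Fin N → ℕ) × ℕ // IsSS d p} => FDelta F d p.1) ∧
    Submodule.span F
        (Set.range fun p : {p : (Fin N → ℕ) × ℕ // IsSS d p} => FDelta F d p.1)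
      = LinearMap.ker (mu F d N) := by
  constructor
  · exact S6.FDelta_indep F d N hN
  · apply le_antisymm
    · exact S6.spanSS_le_ker F d N hN
    · intro x hx
      have hx' : x ∈ S6.spanSS F d N ⊔ S6.spanAnti F d N := by
        rw [S6.sup_eq_top F d N hN]
        trivial
      obtain ⟨y, hy, z, hz, rfl⟩ := Submodule.mem_sup.mp hx'
      have hmuz : mu F d N z = 0 := by
        have hy0 : mu F d N y = 0 := LinearMap.mem_ker.mp (S6.spanSS_le_ker F d N hN hy)
        have hx0 : mu F d N (y + z) = 0 := LinearMap.mem_ker.mp hx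
        rwa [map_add, hy0, zero_add] at hx0
      rw [S6.anti_eq_zero F d N hz hmuz, add_zero]
      exact hy

end
end

section
/- For every semistandard pair (i,j) ∈ I(d,N) × {0,1,…,d}, the element F_Δ(i,j) lies in the kernel of μ_N : ⋀^N Sym^d E ⊗ Sym^d E → ⋀^{N+1} Sym^d E; that is, μ_N(F_Δ(i,j)) = 0. -/
open MvPolynomial TensorProduct

set_option maxHeartbeats 1000000
set_option synthInstance.maxHeartbeats 400000

noncomputable section

variable (F : Type*) [Field F]

lemma ιMulti_mul_ι {M : Type*} [AddCommGroup M] [Module F M] (n : ℕ)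
    (f : Fin n → M) (v : M) :
    (ExteriorAlgebra.ιMulti F n f : ExteriorAlgebra F M) * ExteriorAlgebra.ι F v =
      ExteriorAlgebra.ιMulti F (n + 1) (Fin.snoc f v) := by
  rw [ExteriorAlgebra.ιMulti_apply, ExteriorAlgebra.ιMulti_apply, List.ofFn_succ',
    List.concat_eq_append, List.prod_append, List.prod_singleton]
  simp [Fin.snoc_castSucc, Fin.snoc_last]

lemma coe_mu_Fp (c N : ℕ) (i : Fin N → ℕ) (j : ℕ) :
    ((mu F c N (Fp F c i j) : ⋀[F]^(N + 1) (Sym' F c)) : ExteriorAlgebra F (Sym' F c)) =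
      ExteriorAlgebra.ιMulti F (N + 1)
        (Fin.snoc (fun a => XY F c (i a)) (XY F c j)) := by
  rw [← ιMulti_mul_ι]
  rfl

lemma snoc_eq_comp_swap {M : Type*} {N : ℕ} (f : Fin N → M) (v : M) (α : Fin N) :
    (Fin.snoc (Function.update f α v) (f α) : Fin (N + 1) → M) =
      (Fin.snoc f v : Fin (N + 1) → M) ∘ Equiv.swap α.castSucc (Fin.last N) := by
  funext b
  refine Fin.lastCases ?_ (fun a => ?_) b
  · simp [Equiv.swap_apply_right]
  · rcases eq_or_ne a α with rfl | hne
    · simp [Equiv.swap_apply_left]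
    · have h1 : a.castSucc ≠ α.castSucc := by simpa using hne
      have h2 : a.castSucc ≠ Fin.last N := (Fin.castSucc_lt_last a).ne
      simp [Function.comp, Equiv.swap_apply_of_ne_of_ne h1 h2,
        Function.update_of_ne hne]

/-- Each `F_Δ(i,j)` for a semistandard pair `(i,j)` lies in the kernel of the
multiplication map `μ_N : ⋀^N Sym^d E ⊗ Sym^d E → ⋀^{N+1} Sym^d E`. -/
theorem statement7 (F : Type*) [Field F] (N d : ℕ) (hN : 0 < N)
    (p : (Fin N → ℕ) × ℕ) (hp : IsSS d p) :
    mu F d N (FDelta F d p) = 0 := by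
  obtain ⟨hmono, hbd, hj, h0⟩ := hp
  rw [FDelta]
  by_cases hex : ∃ a, p.1 a = p.2
  · rw [if_pos hex]
    obtain ⟨a, ha⟩ := hex
    apply Subtype.coe_injective
    dsimp only
    rw [coe_mu_Fp, ZeroMemClass.coe_zero]
    exact AlternatingMap.map_eq_zero_of_eq (ExteriorAlgebra.ιMulti F (N + 1))
      (Fin.snoc (fun a => XY F d (p.1 a)) (XY F d p.2))
      (i := a.castSucc) (j := Fin.last N)
      (by simp [Fin.snoc_castSucc, Fin.snoc_last, ha]) (Fin.castSucc_lt_last a).ne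
  · rw [if_neg hex]
    have hne : (Finset.univ.filter fun a : Fin N => p.1 a ≤ p.2).Nonempty :=
      ⟨⟨0, hN⟩, by simp [h0 ⟨0, hN⟩ rfl]⟩
    rw [Pmap, dif_pos hne]
    set α := (Finset.univ.filter fun a : Fin N => p.1 a ≤ p.2).max' hne with hα
    rw [map_add]
    apply Subtype.coe_injective
    dsimp only
    rw [Submodule.coe_add, coe_mu_Fp, coe_mu_Fp, ZeroMemClass.coe_zero]
    have hupd : (fun a => XY F d (Function.update p.1 α p.2 a)) =
        Function.update (fun a => XY F d (p.1 a)) α (XY F d p.2) := by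
      funext a
      rcases eq_or_ne a α with rfl | h
      · simp
      · simp [Function.update_of_ne h]
    rw [hupd, snoc_eq_comp_swap,
      AlternatingMap.map_swap _ _ (Fin.castSucc_lt_last α).ne]
    abel

end
end

section
/- Let k ∈ I(d+1,N+1) be strictly increasing and let t be an integer with |k|−N−1 ≤ t ≤ |k|−2. Then Σ_{α=1}^{N+1} k_α · Σ_{i ∈ B(k−u^{(α)})} F(i, t−|i|) = Σ_{β=1}^{N} Σ_{j ∈ B(k)−u^{(β)}} (j_β+1) · F(j, t−|j|) + Σ_{j ∈ B(k)} (|k|−N−|j|) · F(j, t−|j|), where B(k)−u^{(β)} = { j−u^{(β)} : j ∈ B(k) }. -/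
open MvPolynomial TensorProduct

set_option maxHeartbeats 1000000
set_option synthInstance.maxHeartbeats 400000

noncomputable section

variable (F : Type*) [Field F]

/-- The monomial `X^{c-i}Y^i` for an integer index `i`, with the convention that it is `0`
whenever `i` lies outside `{0,…,c}`. -/
def ZXY (c : ℕ) (i : ℤ) : Sym' F c := if 0 ≤ i then XY F c i.toNat else 0

/-- `F_∧^{(c)}(k)` for an integer multi-index, with out-of-range factors set to `0`. -/
def Zwedge (c : ℕ) {r : ℕ} (k : Fin r → ℤ) : ↥(⋀[F]^r (Sym' F c)) :=
  ⟨ExteriorAlgebra.ιMulti F r fun a => ZXY F c (k a),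
    ExteriorAlgebra.ιMulti_range F r (Set.mem_range_self _)⟩

/-- `F(i,j)` for integer indices: it is `F_∧^{(d)}(i) ⊗ X^{d-j}Y^j` when all entries of `i` and
`j` lie in `{0,…,d}`, and `0` otherwise. -/
def ZFp (d : ℕ) {N : ℕ} (i : Fin N → ℤ) (j : ℤ) :
    (⋀[F]^N (Sym' F d)) ⊗[F] (Sym' F d) :=
  Zwedge F d i ⊗ₜ[F] ZXY F d j

/-- The box `B(m) = [m₁,m₂) × ⋯ × [m_N, m_{N+1})` for an integer tuple `m`. -/
def Zbox {N : ℕ} (m : Fin (N + 1) → ℤ) : Finset (Fin N → ℤ) :=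
  Fintype.piFinset fun a : Fin N => Finset.Ico (m a.castSucc) (m a.succ)

/-- If the integer multi-index has a repeated entry, `F(i,j) = 0`. -/
lemma ZFp_eq_zero_of_rep {d N : ℕ} {i : Fin N → ℤ} (j : ℤ) {a a' : Fin N}
    (hne : a ≠ a') (h : i a = i a') : ZFp F d i j = 0 := by
  have h0 : (ExteriorAlgebra.ιMulti F N fun b => ZXY F d (i b)) = 0 :=
    (ExteriorAlgebra.ιMulti F N).map_eq_zero_of_eq _ (by rw [h]) hne
  have hz : Zwedge F d i = 0 := Subtype.ext (by simpa [Zwedge] using h0)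
  rw [ZFp, hz, TensorProduct.zero_tmul]

/-- `B(k) - u^{(β)}` is itself a box. -/
lemma image_box_eq {N : ℕ} (k : Fin (N + 1) → ℕ) (β : Fin N) :
    (Zbox fun b => (k b : ℤ)).image (fun j a => j a - if a = β then 1 else 0)
      = Fintype.piFinset (fun a : Fin N =>
          Finset.Ico ((k a.castSucc : ℤ) - if a = β then 1 else 0)
            ((k a.succ : ℤ) - if a = β then 1 else 0)) := by
  ext j
  simp only [Finset.mem_image, Zbox, Fintype.mem_piFinset, Finset.mem_Ico]
  constructor
  · rintro ⟨i, hi, rfl⟩ a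
    have := hi a
    simp only []
    split_ifs <;> omega
  · intro h
    refine ⟨fun a => j a + if a = β then 1 else 0, fun a => ?_, ?_⟩
    · have := h a
      beta_reduce
      split_ifs at this ⊢ <;> omega
    · funext a; ring

lemma sum_extend {ι M : Type*} [DecidableEq ι] [AddCommMonoid M] {B S : Finset ι}
    (h : B ⊆ S) (f : ι → M) : ∑ j ∈ B, f j = ∑ j ∈ S, if j ∈ B then f j else 0 := by
  rw [Finset.sum_ite_mem, Finset.inter_eq_right.mpr h]

open Classical in
/-- The core integer identity, valid for `j ∈ S` with pairwise distinct entries. -/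
lemma core_identity {N : ℕ} (k : Fin (N + 1) → ℕ) (hk : StrictMono k) (j : Fin N → ℤ)
    (hS : ∀ a : Fin N, (k a.castSucc : ℤ) - 1 ≤ j a ∧ j a < k a.succ)
    (hinj : ∀ a a' : Fin N, a ≠ a' → j a ≠ j a') :
    ∑ α : Fin (N + 1), (k α : ℤ) *
        (if ∀ a : Fin N, (k a.castSucc : ℤ) - (if a.castSucc = α then 1 else 0) ≤ j a ∧
            j a < (k a.succ : ℤ) - (if a.succ = α then 1 else 0) then 1 else 0)
    = (∑ β : Fin N, (j β + 1) *
        (if ∀ a : Fin N, (k a.castSucc : ℤ) - (if a = β then 1 else 0) ≤ j a ∧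
            j a < (k a.succ : ℤ) - (if a = β then 1 else 0) then 1 else 0))
      + (if ∀ a : Fin N, (k a.castSucc : ℤ) ≤ j a ∧ j a < (k a.succ : ℤ) then 1 else 0) *
        ((∑ a, (k a : ℤ)) - N - ∑ a, j a) := by
  have hmono : ∀ a : Fin N, (k a.castSucc : ℤ) < k a.succ := fun a => by
    exact_mod_cast Nat.cast_lt.mpr (hk (Fin.castSucc_lt_succ : a.castSucc < a.succ))
  by_cases hB : ∀ a : Fin N, (k a.castSucc : ℤ) ≤ j a ∧ j a < (k a.succ : ℤ)
  · -- j ∈ B(k)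
    rw [if_pos hB, one_mul, Fin.sum_univ_succ]
    have h0 : ∀ a : Fin N, (k a.castSucc : ℤ) - (if a.castSucc = (0 : Fin (N + 1)) then 1 else 0)
        ≤ j a ∧ j a < (k a.succ : ℤ) - (if a.succ = (0 : Fin (N + 1)) then 1 else 0) := by
      intro a
      have h := hB a
      refine ⟨by split_ifs <;> omega, ?_⟩
      rw [if_neg (Fin.succ_ne_zero a)]; omega
    rw [if_pos h0, mul_one]
    have hterm : ∀ β : Fin N,
        (k β.succ : ℤ) *
          (if ∀ a : Fin N, (k a.castSucc : ℤ) - (if a.castSucc = β.succ then 1 else 0) ≤ j a ∧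
              j a < (k a.succ : ℤ) - (if a.succ = β.succ then 1 else 0) then 1 else 0)
        = (j β + 1) *
            (if ∀ a : Fin N, (k a.castSucc : ℤ) - (if a = β then 1 else 0) ≤ j a ∧
                j a < (k a.succ : ℤ) - (if a = β then 1 else 0) then 1 else 0)
          + ((k β.succ : ℤ) - 1 - j β) := by
      intro β
      have e1 : (∀ a : Fin N, (k a.castSucc : ℤ) - (if a.castSucc = β.succ then 1 else 0) ≤ j a ∧
          j a < (k a.succ : ℤ) - (if a.succ = β.succ then 1 else 0)) ↔
          j β < (k β.succ : ℤ) - 1 := by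
        constructor
        · intro h
          have := (h β).2
          rwa [if_pos rfl] at this
        · intro hlt a
          have h := hB a
          refine ⟨by split_ifs <;> omega, ?_⟩
          by_cases hab : a = β
          · subst hab; rw [if_pos rfl]; omega
          · rw [if_neg (fun hc => hab (Fin.succ_injective _ hc))]; omega
      have e2 : (∀ a : Fin N, (k a.castSucc : ℤ) - (if a = β then 1 else 0) ≤ j a ∧
          j a < (k a.succ : ℤ) - (if a = β then 1 else 0)) ↔
          j β < (k β.succ : ℤ) - 1 := by
        constructor
        · intro h
          have := (h β).2
          rwa [if_pos rfl] at this
        · intro hlt a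
          have h := hB a
          refine ⟨by split_ifs <;> omega, ?_⟩
          by_cases hab : a = β
          · subst hab; rw [if_pos rfl]; omega
          · rw [if_neg hab]; omega
      rw [if_congr e1 rfl rfl, if_congr e2 rfl rfl]
      have hb := (hB β).2
      by_cases hlt : j β < (k β.succ : ℤ) - 1
      · rw [if_pos hlt]; ring
      · rw [if_neg hlt]
        have hjb : j β = (k β.succ : ℤ) - 1 := by omega
        rw [hjb]; ring
    rw [Finset.sum_congr rfl (fun β _ => hterm β), Finset.sum_add_distrib]
    have hsplit : (∑ a : Fin (N + 1), (k a : ℤ)) = (k 0 : ℤ) + ∑ β : Fin N, (k β.succ : ℤ) :=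
      Fin.sum_univ_succ _
    have hone : ∑ β : Fin N, ((k β.succ : ℤ) - 1 - j β)
        = (∑ β : Fin N, (k β.succ : ℤ)) - N - ∑ a, j a := by
      rw [Finset.sum_sub_distrib, Finset.sum_sub_distrib, Finset.sum_const]
      simp [mul_comm]
    rw [hone, hsplit]
    ring
  · -- j ∉ B(k)
    push_neg at hB
    obtain ⟨γ, hγ0⟩ := hB
    have hγ : j γ = (k γ.castSucc : ℤ) - 1 := by
      have h := hS γ
      by_cases h' : (k γ.castSucc : ℤ) ≤ j γ
      · exact absurd (hγ0 h') (by omega)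
      · omega
    have hBfalse : ¬ ∀ a : Fin N, (k a.castSucc : ℤ) ≤ j a ∧ j a < (k a.succ : ℤ) := by
      intro h
      have := (h γ).1
      omega
    rw [if_neg hBfalse, zero_mul, add_zero]
    by_cases huniq : ∀ a : Fin N, a ≠ γ → (k a.castSucc : ℤ) ≤ j a
    · -- γ is the unique index with j γ = k γ - 1
      have hL1 : (∀ a : Fin N,
          (k a.castSucc : ℤ) - (if a.castSucc = γ.castSucc then 1 else 0) ≤ j a ∧
          j a < (k a.succ : ℤ) - (if a.succ = γ.castSucc then 1 else 0)) := by
        intro a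
        constructor
        · by_cases hag : a = γ
          · subst hag; rw [if_pos rfl]; omega
          · rw [if_neg (fun hc => hag (Fin.castSucc_injective _ hc))]
            exact huniq a hag
        · by_cases hsc : a.succ = γ.castSucc
          · rw [if_pos hsc]
            have hknum : (k a.succ : ℤ) = (k γ.castSucc : ℤ) := by rw [hsc]
            have hag : a ≠ γ := by
              intro h; subst h
              have := congrArg Fin.val hsc
              simp [Fin.val_succ] at this
            have hne' : j a ≠ j γ := hinj a γ hag
            have := (hS a).2
            omega
          · rw [if_neg hsc]
            have := (hS a).2
            omega
      have hLs : ∀ α : Fin (N + 1), α ≠ γ.castSucc →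
          (k α : ℤ) * (if ∀ a : Fin N,
            (k a.castSucc : ℤ) - (if a.castSucc = α then 1 else 0) ≤ j a ∧
            j a < (k a.succ : ℤ) - (if a.succ = α then 1 else 0) then 1 else 0) = 0 := by
        intro α hne
        rw [if_neg, mul_zero]
        intro h
        have := (h γ).1
        rw [if_neg (fun hc => hne hc.symm)] at this
        omega
      have hR1 : (∀ a : Fin N, (k a.castSucc : ℤ) - (if a = γ then 1 else 0) ≤ j a ∧
          j a < (k a.succ : ℤ) - (if a = γ then 1 else 0)) := by
        intro a
        by_cases hag : a = γ
        · subst hag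
          rw [if_pos rfl]
          have := hmono a
          omega
        · rw [if_neg hag]
          have := (hS a).2
          exact ⟨by have := huniq a hag; omega, by omega⟩
      have hRs : ∀ β : Fin N, β ≠ γ →
          (j β + 1) * (if ∀ a : Fin N,
            (k a.castSucc : ℤ) - (if a = β then 1 else 0) ≤ j a ∧
            j a < (k a.succ : ℤ) - (if a = β then 1 else 0) then 1 else 0) = 0 := by
        intro β hne
        rw [if_neg, mul_zero]
        intro h
        have := (h γ).1
        rw [if_neg (fun hc : γ = β => hne hc.symm)] at this
        omega
      rw [Finset.sum_eq_single γ.castSucc (fun b _ hb => hLs b hb)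
        (fun hb => absurd (Finset.mem_univ _) hb),
        Finset.sum_eq_single γ (fun b _ hb => hRs b hb)
        (fun hb => absurd (Finset.mem_univ _) hb),
        if_pos hL1, if_pos hR1]
      omega
    · -- two indices hit the lower wall: everything vanishes
      push_neg at huniq
      obtain ⟨γ', hne', hlt'⟩ := huniq
      have hγ' : j γ' = (k γ'.castSucc : ℤ) - 1 := by
        have := hS γ'
        omega
      have hL : ∀ α : Fin (N + 1), (k α : ℤ) * (if ∀ a : Fin N,
          (k a.castSucc : ℤ) - (if a.castSucc = α then 1 else 0) ≤ j a ∧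
          j a < (k a.succ : ℤ) - (if a.succ = α then 1 else 0) then 1 else 0) = 0 := by
        intro α
        rw [if_neg, mul_zero]
        intro h
        have h1 := (h γ).1
        have h2 := (h γ').1
        by_cases hc : γ.castSucc = α
        · rw [if_neg (fun hc' : γ'.castSucc = α =>
            hne' (Fin.castSucc_injective _ (hc'.trans hc.symm)))] at h2
          omega
        · rw [if_neg hc] at h1
          omega
      have hR : ∀ β : Fin N, (j β + 1) * (if ∀ a : Fin N,
          (k a.castSucc : ℤ) - (if a = β then 1 else 0) ≤ j a ∧
          j a < (k a.succ : ℤ) - (if a = β then 1 else 0) then 1 else 0) = 0 := by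
        intro β
        rw [if_neg, mul_zero]
        intro h
        have h1 := (h γ).1
        have h2 := (h γ').1
        by_cases hc : γ = β
        · rw [if_neg (fun hc' : γ' = β => hne' (hc'.trans hc.symm))] at h2
          omega
        · rw [if_neg hc] at h1
          omega
      rw [Finset.sum_eq_zero (fun α _ => hL α), Finset.sum_eq_zero (fun β _ => hR β)]

/-- Lemma 2.8 of the paper, the technical lemma. For strictly increasing
`k ∈ I(d+1,N+1)` and any integer `t` with `|k|-N-1 ≤ t ≤ |k|-2`,
`Σ_{α=1}^{N+1} k_α Σ_{i ∈ B(k-u^{(α)})} F(i, t-|i|)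
  = Σ_{β=1}^{N} Σ_{j ∈ B(k)-u^{(β)}} (j_β+1) F(j, t-|j|)
    + Σ_{j ∈ B(k)} (|k|-N-|j|) F(j, t-|j|)`. -/
theorem statement9 (F : Type*) [Field F] (N d : ℕ) (hN : 0 < N)
    (k : Fin (N + 1) → ℕ) (hk : StrictMono k) (hk' : ∀ a, k a ≤ d + 1)
    (t : ℤ) (ht1 : (∑ a, (k a : ℤ)) - N - 1 ≤ t) (ht2 : t ≤ (∑ a, (k a : ℤ)) - 2) :
    ∑ α : Fin (N + 1), (k α : F) •
        ∑ i ∈ Zbox (fun b => (k b : ℤ) - if b = α then 1 else 0),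
          ZFp F d i (t - ∑ a, i a)
    = (∑ β : Fin N,
        ∑ j ∈ (Zbox fun b => (k b : ℤ)).image (fun j a => j a - if a = β then 1 else 0),
          ((j β + 1 : ℤ) : F) • ZFp F d j (t - ∑ a, j a))
      + ∑ j ∈ Zbox (fun b => (k b : ℤ)),
          (((∑ a, (k a : ℤ)) - N - (∑ a, j a) : ℤ) : F) • ZFp F d j (t - ∑ a, j a) := by
  classical
  -- the big common box `S`
  set S : Finset (Fin N → ℤ) :=
    Fintype.piFinset fun a : Fin N =>
      Finset.Ico ((k a.castSucc : ℤ) - 1) ((k a.succ : ℤ)) with hSdef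
  have hsubA : ∀ α : Fin (N + 1),
      Zbox (fun b => (k b : ℤ) - if b = α then 1 else 0) ⊆ S := by
    intro α i hi
    simp only [Zbox, Fintype.mem_piFinset, Finset.mem_Ico, hSdef] at hi ⊢
    intro a
    have := hi a
    split_ifs at this <;> omega
  have hsubB : ∀ β : Fin N,
      (Fintype.piFinset (fun a : Fin N =>
          Finset.Ico ((k a.castSucc : ℤ) - if a = β then 1 else 0)
            ((k a.succ : ℤ) - if a = β then 1 else 0))) ⊆ S := by
    intro β i hi
    simp only [Fintype.mem_piFinset, Finset.mem_Ico, hSdef] at hi ⊢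
    intro a
    have := hi a
    split_ifs at this <;> omega
  have hsubK : Zbox (fun b => (k b : ℤ)) ⊆ S := by
    intro i hi
    simp only [Zbox, Fintype.mem_piFinset, Finset.mem_Ico, hSdef] at hi ⊢
    intro a
    have := hi a
    omega
  have hL : ∑ α : Fin (N + 1), (k α : F) •
        ∑ i ∈ Zbox (fun b => (k b : ℤ) - if b = α then 1 else 0),
          ZFp F d i (t - ∑ a, i a)
      = ∑ i ∈ S, (((∑ α : Fin (N + 1), (k α : ℤ) *
          (if i ∈ Zbox (fun b => (k b : ℤ) - if b = α then 1 else 0) then 1 else 0)) : ℤ) : F) •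
            ZFp F d i (t - ∑ a, i a) := by
    calc ∑ α : Fin (N + 1), (k α : F) •
        ∑ i ∈ Zbox (fun b => (k b : ℤ) - if b = α then 1 else 0),
          ZFp F d i (t - ∑ a, i a)
        = ∑ α : Fin (N + 1), ∑ i ∈ S,
            (if i ∈ Zbox (fun b => (k b : ℤ) - if b = α then 1 else 0) then
              (k α : F) • ZFp F d i (t - ∑ a, i a) else 0) := by
          refine Finset.sum_congr rfl fun α _ => ?_
          rw [Finset.smul_sum, sum_extend (hsubA α)]
      _ = ∑ i ∈ S, ∑ α : Fin (N + 1),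
            (if i ∈ Zbox (fun b => (k b : ℤ) - if b = α then 1 else 0) then
              (k α : F) • ZFp F d i (t - ∑ a, i a) else 0) := Finset.sum_comm
      _ = _ := by
          refine Finset.sum_congr rfl fun i _ => ?_
          rw [Int.cast_sum, Finset.sum_smul]
          refine Finset.sum_congr rfl fun α _ => ?_
          split_ifs with h
          · push_cast
            rw [mul_one]
          · simp
  have hJ : (∑ β : Fin N,
        ∑ j ∈ (Zbox fun b => (k b : ℤ)).image (fun j a => j a - if a = β then 1 else 0),
          ((j β + 1 : ℤ) : F) • ZFp F d j (t - ∑ a, j a))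
      = ∑ j ∈ S, (((∑ β : Fin N, (j β + 1) *
          (if j ∈ Fintype.piFinset (fun a : Fin N =>
              Finset.Ico ((k a.castSucc : ℤ) - if a = β then 1 else 0)
                ((k a.succ : ℤ) - if a = β then 1 else 0)) then 1 else 0)) : ℤ) : F) •
            ZFp F d j (t - ∑ a, j a) := by
    calc (∑ β : Fin N,
        ∑ j ∈ (Zbox fun b => (k b : ℤ)).image (fun j a => j a - if a = β then 1 else 0),
          ((j β + 1 : ℤ) : F) • ZFp F d j (t - ∑ a, j a))
        = ∑ β : Fin N, ∑ j ∈ S,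
            (if j ∈ Fintype.piFinset (fun a : Fin N =>
                Finset.Ico ((k a.castSucc : ℤ) - if a = β then 1 else 0)
                  ((k a.succ : ℤ) - if a = β then 1 else 0)) then
              ((j β + 1 : ℤ) : F) • ZFp F d j (t - ∑ a, j a) else 0) := by
          refine Finset.sum_congr rfl fun β _ => ?_
          rw [image_box_eq, sum_extend (hsubB β)]
      _ = ∑ j ∈ S, ∑ β : Fin N,
            (if j ∈ Fintype.piFinset (fun a : Fin N =>
                Finset.Ico ((k a.castSucc : ℤ) - if a = β then 1 else 0)
                  ((k a.succ : ℤ) - if a = β then 1 else 0)) then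
              ((j β + 1 : ℤ) : F) • ZFp F d j (t - ∑ a, j a) else 0) := Finset.sum_comm
      _ = _ := by
          refine Finset.sum_congr rfl fun j _ => ?_
          rw [Int.cast_sum, Finset.sum_smul]
          refine Finset.sum_congr rfl fun β _ => ?_
          split_ifs with h
          · push_cast
            rw [mul_one]
          · simp
  have hK : ∑ j ∈ Zbox (fun b => (k b : ℤ)),
        (((∑ a, (k a : ℤ)) - N - (∑ a, j a) : ℤ) : F) • ZFp F d j (t - ∑ a, j a)
      = ∑ j ∈ S, ((((if j ∈ Zbox (fun b => (k b : ℤ)) then 1 else 0) *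
          ((∑ a, (k a : ℤ)) - N - ∑ a, j a)) : ℤ) : F) • ZFp F d j (t - ∑ a, j a) := by
    rw [sum_extend hsubK]
    refine Finset.sum_congr rfl fun j _ => ?_
    split_ifs with h
    · rw [one_mul]
    · simp
  rw [hL, hJ, hK, ← Finset.sum_add_distrib]
  refine Finset.sum_congr rfl fun j hj => ?_
  by_cases hrep : ∃ a a' : Fin N, a ≠ a' ∧ j a = j a'
  · obtain ⟨a, a', hne, heq⟩ := hrep
    rw [ZFp_eq_zero_of_rep F (t - ∑ a, j a) hne heq]
    simp
  · have hinj : ∀ a a' : Fin N, a ≠ a' → j a ≠ j a' := by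
      intro a a' h1 h2
      exact hrep ⟨a, a', h1, h2⟩
    have hjS : ∀ a : Fin N, (k a.castSucc : ℤ) - 1 ≤ j a ∧ j a < k a.succ := by
      simp only [hSdef, Fintype.mem_piFinset, Finset.mem_Ico] at hj
      exact hj
    have hcore := core_identity k hk j hjS hinj
    have hmemA : ∀ α : Fin (N + 1),
        (j ∈ Zbox (fun b => (k b : ℤ) - if b = α then 1 else 0)) ↔
        (∀ a : Fin N, (k a.castSucc : ℤ) - (if a.castSucc = α then 1 else 0) ≤ j a ∧
            j a < (k a.succ : ℤ) - (if a.succ = α then 1 else 0)) := by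
      intro α
      simp [Zbox, Fintype.mem_piFinset, Finset.mem_Ico]
    have hmemB : ∀ β : Fin N,
        (j ∈ Fintype.piFinset (fun a : Fin N =>
            Finset.Ico ((k a.castSucc : ℤ) - if a = β then 1 else 0)
              ((k a.succ : ℤ) - if a = β then 1 else 0))) ↔
        (∀ a : Fin N, (k a.castSucc : ℤ) - (if a = β then 1 else 0) ≤ j a ∧
            j a < (k a.succ : ℤ) - (if a = β then 1 else 0)) := by
      intro β
      simp [Fintype.mem_piFinset, Finset.mem_Ico]
    have hmemK : (j ∈ Zbox (fun b => (k b : ℤ))) ↔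
        (∀ a : Fin N, (k a.castSucc : ℤ) ≤ j a ∧ j a < (k a.succ : ℤ)) := by
      simp [Zbox, Fintype.mem_piFinset, Finset.mem_Ico]
    have hAeq : (∑ α : Fin (N + 1), (k α : ℤ) *
        (if j ∈ Zbox (fun b => (k b : ℤ) - if b = α then 1 else 0) then 1 else 0))
        = ∑ α : Fin (N + 1), (k α : ℤ) *
          (if ∀ a : Fin N, (k a.castSucc : ℤ) - (if a.castSucc = α then 1 else 0) ≤ j a ∧
              j a < (k a.succ : ℤ) - (if a.succ = α then 1 else 0) then 1 else 0) :=
      Finset.sum_congr rfl fun α _ => by rw [if_congr (hmemA α) rfl rfl]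
    have hBeq : (∑ β : Fin N, (j β + 1) *
        (if j ∈ Fintype.piFinset (fun a : Fin N =>
            Finset.Ico ((k a.castSucc : ℤ) - if a = β then 1 else 0)
              ((k a.succ : ℤ) - if a = β then 1 else 0)) then 1 else 0))
        = ∑ β : Fin N, (j β + 1) *
          (if ∀ a : Fin N, (k a.castSucc : ℤ) - (if a = β then 1 else 0) ≤ j a ∧
              j a < (k a.succ : ℤ) - (if a = β then 1 else 0) then 1 else 0) :=
      Finset.sum_congr rfl fun β _ => by rw [if_congr (hmemB β) rfl rfl]
    have hKeq : ((if j ∈ Zbox (fun b => (k b : ℤ)) then (1 : ℤ) else 0) *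
          ((∑ a, (k a : ℤ)) - N - ∑ a, j a))
        = (if ∀ a : Fin N, (k a.castSucc : ℤ) ≤ j a ∧ j a < (k a.succ : ℤ) then (1 : ℤ) else 0) *
          ((∑ a, (k a : ℤ)) - N - ∑ a, j a) := by
      rw [if_congr hmemK rfl rfl]
    rw [← add_smul, ← Int.cast_add, hAeq, hBeq, hKeq, hcore]

end
end
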